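/- arXiv:1303.1878 — 4 statements merged into one kernel-verified Lean document; each statement's English description precedes it below -/
import Mathlib

section
/- Let H be a Hopf algebra over a field k and π : H → K a surjective Hopf algebra morphism such that ker(π) is left a-normal, i.e. ad_l(a) := Σ a_(2) ⊗ a_(1)S(a_(3)) ∈ ker(π) ⊗ H for all a ∈ ker(π). If the antipode S of H is bijective, then the left and right coinvariant subalgebras coincide: { a ∈ H : (π ⊗ id)Δ(a) = 1 ⊗ a } = { a ∈ H : (id ⊗ π)Δ(a) = a ⊗ 1 }. -/
open TensorProduct Coalgebra HopfAlgebra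

set_option maxHeartbeats 1000000
set_option synthInstance.maxHeartbeats 200000

/-- The left adjoint coaction `a ↦ Σ a₍₂₎ ⊗ a₍₁₎ S(a₍₃₎)`, built from the
comultiplication and a given antipode map `S`. -/
noncomputable def adlWith (k H : Type*) [CommRing k] [Ring H] [Bialgebra k H]
    (S : H →ₗ[k] H) : H →ₗ[k] H ⊗[k] H :=
  (LinearMap.lTensor H (LinearMap.mul' k H)) ∘ₗ
  (TensorProduct.assoc k H H H).toLinearMap ∘ₗ
  (LinearMap.rTensor H (TensorProduct.comm k H H).toLinearMap) ∘ₗ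
  (TensorProduct.assoc k H H H).symm.toLinearMap ∘ₗ
  (LinearMap.lTensor H (LinearMap.lTensor H S)) ∘ₗ
  (LinearMap.lTensor H Coalgebra.comul) ∘ₗ
  Coalgebra.comul

/-- The right adjoint coaction `a ↦ Σ a₍₂₎ ⊗ S(a₍₁₎) a₍₃₎`. -/
noncomputable def adrWith (k H : Type*) [CommRing k] [Ring H] [Bialgebra k H]
    (S : H →ₗ[k] H) : H →ₗ[k] H ⊗[k] H :=
  (LinearMap.lTensor H (LinearMap.mul' k H)) ∘ₗ
  (TensorProduct.assoc k H H H).toLinearMap ∘ₗ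
  (LinearMap.rTensor H (TensorProduct.comm k H H).toLinearMap) ∘ₗ
  (TensorProduct.assoc k H H H).symm.toLinearMap ∘ₗ
  (LinearMap.rTensor (H ⊗[k] H) S) ∘ₗ
  (LinearMap.lTensor H Coalgebra.comul) ∘ₗ
  Coalgebra.comul

/-- The left adjoint coaction of a Hopf algebra. -/
noncomputable def adl (k H : Type*) [CommRing k] [Ring H] [HopfAlgebra k H] :
    H →ₗ[k] H ⊗[k] H :=
  adlWith k H (HopfAlgebra.antipode (R := k))

/-- The right adjoint coaction of a Hopf algebra. -/
noncomputable def adr (k H : Type*) [CommRing k] [Ring H] [HopfAlgebra k H] :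
    H →ₗ[k] H ⊗[k] H :=
  adrWith k H (HopfAlgebra.antipode (R := k))

section Aux

variable {k H : Type*} [CommRing k] [Ring H] [HopfAlgebra k H]

local notation "𝐒" => (HopfAlgebra.antipode (R := k) (A := H))

lemma comul_one'' : Coalgebra.comul (R := k) (1 : H) = (1 : H) ⊗ₜ[k] (1 : H) := by
  simpa [Algebra.TensorProduct.one_def] using Bialgebra.comul_one k H

lemma antipode_one'' : 𝐒 (1 : H) = 1 := by
  have h := HopfAlgebra.mul_antipode_rTensor_comul_apply (R := k) (a := (1 : H))
  rw [comul_one''] at h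
  simpa using h

/-- A representation of the comultiplication of a product, from representations
of the factors. -/
noncomputable def Coalgebra.Repr.mul'' {ι κ : Type*} {a b : H} (ra : Repr k a ι)
    (rb : Repr k b κ) : Repr k (a * b) (ι × κ) where
  index := ra.index ×ˢ rb.index
  left := fun p => ra.left p.1 * rb.left p.2
  right := fun p => ra.right p.1 * rb.right p.2
  eq := by
    rw [Bialgebra.comul_mul, ← ra.eq, ← rb.eq, Finset.sum_mul_sum]
    rw [Finset.sum_product]
    simp [Algebra.TensorProduct.tmul_mul_tmul]

lemma sum_counit_smul_left {a : H} (r : Repr k a (H × H)) :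
    ∑ i ∈ r.index, counit (R := k) (r.right i) • r.left i = a := by
  have h := Coalgebra.sum_tmul_counit_eq r
  have h2 := congrArg (TensorProduct.rid k H) h
  rw [map_sum] at h2
  simp only [TensorProduct.rid_tmul, one_smul] at h2
  exact h2

lemma sum_counit_smul_right {a : H} (r : Repr k a (H × H)) :
    ∑ i ∈ r.index, counit (R := k) (r.left i) • r.right i = a := by
  have h := Coalgebra.sum_counit_tmul_eq r
  have h2 := congrArg (TensorProduct.lid k H) h
  rw [map_sum] at h2
  simp only [TensorProduct.lid_tmul, one_smul] at h2
  exact h2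

/-- auxiliary trilinear functional `x ⊗ (y ⊗ z) ↦ w * (S x * (y * (u * S (z * v))))`. -/
noncomputable def auxPhi (k H : Type*) [CommRing k] [Ring H] [HopfAlgebra k H] (w u v : H) :
    H ⊗[k] (H ⊗[k] H) →ₗ[k] H :=
  LinearMap.mulLeft k w ∘ₗ LinearMap.mul' k H ∘ₗ
    LinearMap.rTensor H (HopfAlgebra.antipode (R := k)) ∘ₗ
    LinearMap.lTensor H (LinearMap.mul' k H ∘ₗ
      LinearMap.lTensor H (LinearMap.mulLeft k u ∘ₗ
        (HopfAlgebra.antipode (R := k)) ∘ₗ LinearMap.mulRight k v))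

lemma auxPhi_apply (w u v x y z : H) :
    auxPhi k H w u v (x ⊗ₜ[k] (y ⊗ₜ[k] z)) = w * (𝐒 x * (y * (u * 𝐒 (z * v)))) := by
  simp [auxPhi]

/-- auxiliary trilinear functional `x ⊗ (y ⊗ z) ↦ S x * (y * S (u * z))`. -/
noncomputable def auxPsi (k H : Type*) [CommRing k] [Ring H] [HopfAlgebra k H] (u : H) :
    H ⊗[k] (H ⊗[k] H) →ₗ[k] H :=
  LinearMap.mul' k H ∘ₗ
    LinearMap.rTensor H (HopfAlgebra.antipode (R := k)) ∘ₗ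
    LinearMap.lTensor H (LinearMap.mul' k H ∘ₗ
      LinearMap.lTensor H ((HopfAlgebra.antipode (R := k)) ∘ₗ LinearMap.mulLeft k u))

lemma auxPsi_apply (u x y z : H) :
    auxPsi k H u (x ⊗ₜ[k] (y ⊗ₜ[k] z)) = 𝐒 x * (y * 𝐒 (u * z)) := by
  simp [auxPsi]

lemma antipode_mul'' (a b : H) : 𝐒 (a * b) = 𝐒 b * 𝐒 a := by
  classical
  have ra := ℛ k a
  have rb := ℛ k b
  have ra2 : ∀ i : (H × H), Repr k (ra.right i) (H × H) := fun i => ℛ k (ra.right i)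
  have rb2 : ∀ m : (H × H), Repr k (rb.right m) (H × H) := fun m => ℛ k (rb.right m)
  have rc : ∀ i : (H × H), Repr k (ra.left i) (H × H) := fun i => ℛ k (ra.left i)
  have re : ∀ m : (H × H), Repr k (rb.left m) (H × H) := fun m => ℛ k (rb.left m)
  -- Step 1 : expand S b * S a using counit identities
  have hSa : 𝐒 a = ∑ i ∈ ra.index, counit (R := k) (ra.right i) • 𝐒 (ra.left i) := by
    conv_lhs => rw [← sum_counit_smul_left ra]
    rw [map_sum]; simp
  have hSb : 𝐒 b = ∑ m ∈ rb.index, counit (R := k) (rb.right m) • 𝐒 (rb.left m) := by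
    conv_lhs => rw [← sum_counit_smul_left rb]
    rw [map_sum]; simp
  have hsw : ∀ (c d : k) (X Y : H), (d • X) * (c • Y) = X * (Y * algebraMap k H (c * d)) := by
    intro c d X Y
    rw [smul_mul_assoc, mul_smul_comm, smul_smul, ← Algebra.commutes, ← Algebra.smul_def,
      mul_smul_comm, mul_comm d c]
  have step1 : 𝐒 b * 𝐒 a = ∑ m ∈ rb.index, ∑ i ∈ ra.index,
      𝐒 (rb.left m) * (𝐒 (ra.left i) *
        algebraMap k H (counit (R := k) (ra.right i * rb.right m))) := by
    rw [hSa, hSb, Finset.sum_mul_sum]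
    refine Finset.sum_congr rfl fun m _ => Finset.sum_congr rfl fun i _ => ?_
    rw [Bialgebra.counit_mul, hsw]
  -- Step 2 : replace the counit factor by an antipode convolution over a product repr
  have step2 : ∀ (m : (H × H)) (i : (H × H)),
      algebraMap k H (counit (R := k) (ra.right i * rb.right m)) =
      ∑ j ∈ (ra2 i).index, ∑ n ∈ (rb2 m).index,
        ((ra2 i).left j * (rb2 m).left n) * 𝐒 ((ra2 i).right j * (rb2 m).right n) := by
    intro m i
    refine Eq.trans
      (HopfAlgebra.sum_mul_antipode_eq_algebraMap_counit (Coalgebra.Repr.mul'' (ra2 i) (rb2 m))).symm ?_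
    exact Finset.sum_product (s := (ra2 i).index) (t := (rb2 m).index)
      (f := fun p => ((Coalgebra.Repr.mul'' (ra2 i) (rb2 m)).left p) *
        𝐒 ((Coalgebra.Repr.mul'' (ra2 i) (rb2 m)).right p))
  have step3 : 𝐒 b * 𝐒 a = ∑ m ∈ rb.index, ∑ n ∈ (rb2 m).index, ∑ i ∈ ra.index,
      ∑ j ∈ (ra2 i).index,
        𝐒 (rb.left m) * (𝐒 (ra.left i) * ((ra2 i).left j * ((rb2 m).left n *
          𝐒 ((ra2 i).right j * (rb2 m).right n)))) := by
    rw [step1]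
    refine Finset.sum_congr rfl fun m _ => ?_
    calc (∑ i ∈ ra.index,
          𝐒 (rb.left m) * (𝐒 (ra.left i) *
            algebraMap k H (counit (R := k) (ra.right i * rb.right m))))
        = ∑ i ∈ ra.index, ∑ j ∈ (ra2 i).index, ∑ n ∈ (rb2 m).index,
            𝐒 (rb.left m) * (𝐒 (ra.left i) * ((ra2 i).left j * ((rb2 m).left n *
              𝐒 ((ra2 i).right j * (rb2 m).right n)))) := by
          refine Finset.sum_congr rfl fun i _ => ?_
          rw [step2 m i]
          simp only [Finset.mul_sum]
          exact Finset.sum_congr rfl fun j _ => Finset.sum_congr rfl fun n _ => by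
            rw [mul_assoc ((ra2 i).left j)]
      _ = ∑ i ∈ ra.index, ∑ n ∈ (rb2 m).index, ∑ j ∈ (ra2 i).index,
            𝐒 (rb.left m) * (𝐒 (ra.left i) * ((ra2 i).left j * ((rb2 m).left n *
              𝐒 ((ra2 i).right j * (rb2 m).right n)))) :=
          Finset.sum_congr rfl fun i _ => Finset.sum_comm
      _ = ∑ n ∈ (rb2 m).index, ∑ i ∈ ra.index, ∑ j ∈ (ra2 i).index,
            𝐒 (rb.left m) * (𝐒 (ra.left i) * ((ra2 i).left j * ((rb2 m).left n *
              𝐒 ((ra2 i).right j * (rb2 m).right n)))) := Finset.sum_comm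
  -- Step 4 : coassociativity move on `a`
  have key := Coalgebra.sum_tmul_tmul_eq ra rc ra2
  have step4 : ∀ (m : (H × H)) (n : (H × H)),
      (∑ i ∈ ra.index, ∑ j ∈ (ra2 i).index,
        𝐒 (rb.left m) * (𝐒 (ra.left i) * ((ra2 i).left j * ((rb2 m).left n *
          𝐒 ((ra2 i).right j * (rb2 m).right n))))) =
      ∑ i ∈ ra.index, ∑ j ∈ (rc i).index,
        𝐒 (rb.left m) * (𝐒 ((rc i).left j) * ((rc i).right j * ((rb2 m).left n *
          𝐒 (ra.right i * (rb2 m).right n)))) := by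
    intro m n
    have h := congrArg (auxPhi k H (𝐒 (rb.left m)) ((rb2 m).left n) ((rb2 m).right n)) key
    simp only [map_sum, auxPhi_apply] at h
    exact h.symm
  -- Step 5 : collapse the `j` sums and then the `i` sums
  have step5 : ∀ (m : (H × H)) (n : (H × H)),
      (∑ i ∈ ra.index, ∑ j ∈ (rc i).index,
        𝐒 (rb.left m) * (𝐒 ((rc i).left j) * ((rc i).right j * ((rb2 m).left n *
          𝐒 (ra.right i * (rb2 m).right n))))) =
      𝐒 (rb.left m) * ((rb2 m).left n * 𝐒 (a * (rb2 m).right n)) := by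
    intro m n
    have hj : ∀ (i : (H × H)) (X : H),
        (∑ j ∈ (rc i).index, 𝐒 (rb.left m) * (𝐒 ((rc i).left j) * ((rc i).right j * X))) =
        counit (R := k) (ra.left i) • (𝐒 (rb.left m) * X) := by
      intro i X
      rw [← Finset.mul_sum]
      have h2 : (∑ j ∈ (rc i).index, 𝐒 ((rc i).left j) * ((rc i).right j * X)) =
          (∑ j ∈ (rc i).index, 𝐒 ((rc i).left j) * (rc i).right j) * X := by
        rw [Finset.sum_mul]
        exact Finset.sum_congr rfl fun j _ => (mul_assoc _ _ _).symm
      rw [h2, HopfAlgebra.sum_antipode_mul_eq_algebraMap_counit (rc i), ← Algebra.smul_def, mul_smul_comm]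
    calc (∑ i ∈ ra.index, ∑ j ∈ (rc i).index,
        𝐒 (rb.left m) * (𝐒 ((rc i).left j) * ((rc i).right j * ((rb2 m).left n *
          𝐒 (ra.right i * (rb2 m).right n)))))
        = ∑ i ∈ ra.index, counit (R := k) (ra.left i) •
            (𝐒 (rb.left m) * ((rb2 m).left n * 𝐒 (ra.right i * (rb2 m).right n))) :=
          Finset.sum_congr rfl fun i _ => hj i _
      _ = 𝐒 (rb.left m) * ((rb2 m).left n * 𝐒 (a * (rb2 m).right n)) := by
          conv_rhs => rw [← sum_counit_smul_right ra]
          simp only [Finset.sum_mul, smul_mul_assoc, map_sum, map_smul, Finset.mul_sum,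
            mul_smul_comm]
  -- Step 6 : coassociativity move on `b` and final collapse
  have key2 := Coalgebra.sum_tmul_tmul_eq rb re rb2
  have step6 : (∑ m ∈ rb.index, ∑ n ∈ (rb2 m).index,
      𝐒 (rb.left m) * ((rb2 m).left n * 𝐒 (a * (rb2 m).right n))) =
      ∑ m ∈ rb.index, ∑ n ∈ (re m).index,
        𝐒 ((re m).left n) * ((re m).right n * 𝐒 (a * rb.right m)) := by
    have h := congrArg (auxPsi k H a) key2
    simp only [map_sum, auxPsi_apply] at h
    exact h.symm
  have step7 : (∑ m ∈ rb.index, ∑ n ∈ (re m).index,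
      𝐒 ((re m).left n) * ((re m).right n * 𝐒 (a * rb.right m))) = 𝐒 (a * b) := by
    have hn : ∀ (m : (H × H)),
        (∑ n ∈ (re m).index, 𝐒 ((re m).left n) * ((re m).right n * 𝐒 (a * rb.right m))) =
        counit (R := k) (rb.left m) • 𝐒 (a * rb.right m) := by
      intro m
      have h2 : (∑ n ∈ (re m).index, 𝐒 ((re m).left n) * ((re m).right n * 𝐒 (a * rb.right m))) =
          (∑ n ∈ (re m).index, 𝐒 ((re m).left n) * (re m).right n) * 𝐒 (a * rb.right m) := by
        rw [Finset.sum_mul]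
        exact Finset.sum_congr rfl fun n _ => (mul_assoc _ _ _).symm
      rw [h2, HopfAlgebra.sum_antipode_mul_eq_algebraMap_counit (re m), ← Algebra.smul_def]
    calc (∑ m ∈ rb.index, ∑ n ∈ (re m).index,
        𝐒 ((re m).left n) * ((re m).right n * 𝐒 (a * rb.right m)))
        = ∑ m ∈ rb.index, counit (R := k) (rb.left m) • 𝐒 (a * rb.right m) :=
          Finset.sum_congr rfl fun m _ => hn m
      _ = 𝐒 (a * b) := by
          conv_rhs => rw [← sum_counit_smul_right rb]
          simp only [Finset.mul_sum, map_sum, map_smul, mul_smul_comm]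
  have final : 𝐒 b * 𝐒 a = 𝐒 (a * b) := by
    rw [step3]
    calc (∑ m ∈ rb.index, ∑ n ∈ (rb2 m).index, ∑ i ∈ ra.index, ∑ j ∈ (ra2 i).index,
          𝐒 (rb.left m) * (𝐒 (ra.left i) * ((ra2 i).left j * ((rb2 m).left n *
            𝐒 ((ra2 i).right j * (rb2 m).right n)))))
        = ∑ m ∈ rb.index, ∑ n ∈ (rb2 m).index,
            𝐒 (rb.left m) * ((rb2 m).left n * 𝐒 (a * (rb2 m).right n)) :=
          Finset.sum_congr rfl fun m _ => Finset.sum_congr rfl fun n _ =>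
            (step4 m n).trans (step5 m n)
      _ = 𝐒 (a * b) := step6.trans step7
  exact final.symm

end Aux

section Aux2

variable {k H : Type*} [CommRing k] [Ring H] [HopfAlgebra k H]

local notation "𝐒" => (HopfAlgebra.antipode (R := k) (A := H))

lemma adl_repr (x : H) (r : Repr k x (H × H)) (rd : ∀ i : (H × H), Repr k (r.right i) (H × H)) :
    adl k H x = ∑ i ∈ r.index, ∑ j ∈ (rd i).index,
      (rd i).left j ⊗ₜ[k] (r.left i * 𝐒 ((rd i).right j)) := by
  rw [adl, adlWith]
  simp only [LinearMap.comp_apply, LinearEquiv.coe_coe]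
  rw [← r.eq]
  simp only [map_sum, LinearMap.lTensor_tmul]
  refine Finset.sum_congr rfl fun i _ => ?_
  rw [← (rd i).eq]
  simp only [map_sum, TensorProduct.tmul_sum, TensorProduct.sum_tmul,
    LinearMap.lTensor_tmul, LinearMap.rTensor_tmul,
    TensorProduct.assoc_symm_tmul, TensorProduct.assoc_tmul, TensorProduct.comm_tmul,
    LinearMap.mul'_apply, LinearEquiv.coe_coe]

lemma adl_one : adl k H (1 : H) = (1 : H) ⊗ₜ[k] (1 : H) := by
  rw [adl, adlWith]
  simp only [LinearMap.comp_apply, LinearEquiv.coe_coe]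
  rw [comul_one'']
  simp only [LinearMap.lTensor_tmul]
  rw [comul_one'']
  simp only [LinearMap.lTensor_tmul, LinearMap.rTensor_tmul, TensorProduct.assoc_symm_tmul,
    TensorProduct.assoc_tmul, TensorProduct.comm_tmul, LinearMap.mul'_apply,
    antipode_one'', mul_one, LinearEquiv.coe_coe]

variable {K : Type*} [Ring K] [Algebra k K]

/-- `x ↦ Σ x₍₁₎S(x₍₃₎) ⊗ π(x₍₂₎)`. -/
noncomputable def auxG (π : H →ₗ[k] K) : H →ₗ[k] H ⊗[k] K :=
  LinearMap.lTensor H π ∘ₗ (TensorProduct.comm k H H).toLinearMap ∘ₗ adl k H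

/-- `x ⊗ y ↦ Σ x₍₁₎S(x₍₃₎)y ⊗ π(x₍₂₎)`. -/
noncomputable def auxT (π : H →ₗ[k] K) : H ⊗[k] H →ₗ[k] H ⊗[k] K :=
  LinearMap.rTensor K (LinearMap.mul' k H) ∘ₗ
  (TensorProduct.assoc k H H K).symm.toLinearMap ∘ₗ
  LinearMap.lTensor H (TensorProduct.comm k K H).toLinearMap ∘ₗ
  (TensorProduct.assoc k H K H).toLinearMap ∘ₗ
  LinearMap.rTensor H (auxG π)

lemma auxG_repr (π : H →ₗ[k] K) (x : H) (r : Repr k x (H × H)) (rd : ∀ i : (H × H), Repr k (r.right i) (H × H)) :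
    auxG π x = ∑ i ∈ r.index, ∑ j ∈ (rd i).index,
      (r.left i * 𝐒 ((rd i).right j)) ⊗ₜ[k] π ((rd i).left j) := by
  rw [auxG]
  simp only [LinearMap.comp_apply, LinearEquiv.coe_coe]
  rw [adl_repr x r rd]
  simp only [map_sum, TensorProduct.comm_tmul, LinearMap.lTensor_tmul]

lemma auxT_tmul (π : H →ₗ[k] K) (x y : H) (r : Repr k x (H × H)) (rd : ∀ i : (H × H), Repr k (r.right i) (H × H)) :
    auxT π (x ⊗ₜ[k] y) = ∑ i ∈ r.index, ∑ j ∈ (rd i).index,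
      ((r.left i * 𝐒 ((rd i).right j)) * y) ⊗ₜ[k] π ((rd i).left j) := by
  rw [auxT]
  simp only [LinearMap.comp_apply, LinearEquiv.coe_coe, LinearMap.rTensor_tmul]
  rw [auxG_repr π x r rd]
  simp only [TensorProduct.sum_tmul, map_sum, TensorProduct.assoc_tmul,
    TensorProduct.assoc_symm_tmul, TensorProduct.comm_tmul, LinearMap.lTensor_tmul,
    LinearMap.rTensor_tmul, LinearMap.mul'_apply, LinearEquiv.coe_coe]

lemma auxT_zero_of_auxG_zero (π : H →ₗ[k] K) (x y : H) (h : auxG π x = 0) :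
    auxT π (x ⊗ₜ[k] y) = 0 := by
  rw [auxT]
  simp only [LinearMap.comp_apply, LinearEquiv.coe_coe, LinearMap.rTensor_tmul, h,
    TensorProduct.zero_tmul, map_zero]

lemma auxT_one_tmul (π : H →ₗ[k] K) (hπ1 : π 1 = 1) (y : H) :
    auxT π ((1 : H) ⊗ₜ[k] y) = y ⊗ₜ[k] (1 : K) := by
  have hG : auxG π (1 : H) = (1 : H) ⊗ₜ[k] (1 : K) := by
    rw [auxG]
    simp only [LinearMap.comp_apply, LinearEquiv.coe_coe, adl_one]
    simp [hπ1]
  rw [auxT]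
  simp only [LinearMap.comp_apply, LinearEquiv.coe_coe, LinearMap.rTensor_tmul, hG,
    TensorProduct.assoc_tmul, TensorProduct.comm_tmul, LinearMap.lTensor_tmul,
    TensorProduct.assoc_symm_tmul, LinearMap.rTensor_tmul, LinearMap.mul'_apply, one_mul]

/-- `x ⊗ (w ⊗ z) ↦ Σ x·(S(w₍₂₎)z) ⊗ π(w₍₁₎)`. -/
noncomputable def auxL (π : H →ₗ[k] K) : H ⊗[k] (H ⊗[k] H) →ₗ[k] H ⊗[k] K :=
  LinearMap.rTensor K (LinearMap.mul' k H) ∘ₗ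
  (TensorProduct.assoc k H H K).symm.toLinearMap ∘ₗ
  LinearMap.lTensor H ((TensorProduct.comm k K H).toLinearMap ∘ₗ
    TensorProduct.map π (LinearMap.mul' k H ∘ₗ
      LinearMap.rTensor H (HopfAlgebra.antipode (R := k))) ∘ₗ
    (TensorProduct.assoc k H H H).toLinearMap) ∘ₗ
  LinearMap.lTensor H (LinearMap.rTensor H Coalgebra.comul)

lemma auxL_tmul (π : H →ₗ[k] K) (x z w : H) (rw : Repr k w (H × H)) :
    auxL π (x ⊗ₜ[k] (w ⊗ₜ[k] z)) = ∑ l ∈ rw.index,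
      (x * (𝐒 (rw.right l) * z)) ⊗ₜ[k] π (rw.left l) := by
  rw [auxL]
  simp only [LinearMap.comp_apply, LinearEquiv.coe_coe, LinearMap.lTensor_tmul,
    LinearMap.rTensor_tmul]
  rw [← rw.eq]
  simp only [TensorProduct.sum_tmul, TensorProduct.tmul_sum, map_sum,
    TensorProduct.assoc_tmul, TensorProduct.assoc_symm_tmul, TensorProduct.comm_tmul,
    TensorProduct.map_tmul, LinearMap.lTensor_tmul, LinearMap.rTensor_tmul,
    LinearMap.mul'_apply, LinearMap.comp_apply, LinearEquiv.coe_coe]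

/-- `α ⊗ (β ⊗ γ) ↦ (u·(S(β)γ)) ⊗ π(α)`. -/
noncomputable def auxL' (π : H →ₗ[k] K) (u : H) : H ⊗[k] (H ⊗[k] H) →ₗ[k] H ⊗[k] K :=
  LinearMap.lTensor H π ∘ₗ (TensorProduct.comm k H H).toLinearMap ∘ₗ
  LinearMap.lTensor H (LinearMap.mulLeft k u ∘ₗ LinearMap.mul' k H ∘ₗ
    LinearMap.rTensor H (HopfAlgebra.antipode (R := k)))

lemma auxL'_tmul (π : H →ₗ[k] K) (u α β γ : H) :
    auxL' π u (α ⊗ₜ[k] (β ⊗ₜ[k] γ)) = (u * (𝐒 β * γ)) ⊗ₜ[k] π α := by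
  simp [auxL']

end Aux2

section Dir1

variable {k H K : Type*} [CommRing k] [Ring H] [HopfAlgebra k H] [Ring K] [Algebra k K]

local notation "𝐒" => (HopfAlgebra.antipode (R := k) (A := H))

lemma coinv_dir1 (π : H →ₗ[k] K) (hπ1 : π 1 = 1)
    {ι : Type*} (t : Finset ι) (x y : ι → H)
    (hadl : ∀ i ∈ t, auxG π (x i) = 0)
    (a : H) (hw : Coalgebra.comul (R := k) a = (1 : H) ⊗ₜ[k] a + ∑ i ∈ t, x i ⊗ₜ[k] y i) :
    LinearMap.lTensor H π (Coalgebra.comul (R := k) a) = a ⊗ₜ[k] (1 : K) := by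
  classical
  have hmain : auxT π (Coalgebra.comul (R := k) a) =
      LinearMap.lTensor H π (Coalgebra.comul (R := k) a) := by
    have r := ℛ k a
    have ru : ∀ i : (H × H), Repr k (r.left i) (H × H) := fun i => ℛ k (r.left i)
    have rv : ∀ i : (H × H), Repr k (r.right i) (H × H) := fun i => ℛ k (r.right i)
    have rd : ∀ (i : (H × H)) (j : (H × H)), Repr k ((ru i).right j) (H × H) :=
      fun i j => ℛ k ((ru i).right j)
    have rr : ∀ (i : (H × H)) (n : (H × H)), Repr k ((rv i).left n) (H × H) :=
      fun i n => ℛ k ((rv i).left n)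
    have rs : ∀ (i : (H × H)) (n : (H × H)), Repr k ((rv i).right n) (H × H) :=
      fun i n => ℛ k ((rv i).right n)
    have step1 : auxT π (Coalgebra.comul (R := k) a) =
        ∑ i ∈ r.index, ∑ j ∈ (ru i).index, ∑ l ∈ (rd i j).index,
          ((ru i).left j * (𝐒 ((rd i j).right l) * r.right i)) ⊗ₜ[k] π ((rd i j).left l) := by
      conv_lhs => rw [← r.eq]
      rw [map_sum]
      refine Finset.sum_congr rfl fun i _ => ?_
      rw [auxT_tmul π (r.left i) (r.right i) (ru i) (rd i)]
      exact Finset.sum_congr rfl fun j _ => Finset.sum_congr rfl fun l _ => by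
        rw [mul_assoc]
    have key1 := Coalgebra.sum_tmul_tmul_eq r ru rv
    have h2 := congrArg (auxL π) key1
    have step2 :
        (∑ i ∈ r.index, ∑ j ∈ (ru i).index, ∑ l ∈ (rd i j).index,
          ((ru i).left j * (𝐒 ((rd i j).right l) * r.right i)) ⊗ₜ[k] π ((rd i j).left l)) =
        ∑ i ∈ r.index, ∑ n ∈ (rv i).index, ∑ m ∈ (rr i n).index,
          (r.left i * (𝐒 ((rr i n).right m) * (rv i).right n)) ⊗ₜ[k] π ((rr i n).left m) := by
      simp only [map_sum] at h2
      calc (∑ i ∈ r.index, ∑ j ∈ (ru i).index, ∑ l ∈ (rd i j).index,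
            ((ru i).left j * (𝐒 ((rd i j).right l) * r.right i)) ⊗ₜ[k] π ((rd i j).left l))
          = ∑ i ∈ r.index, ∑ j ∈ (ru i).index,
              auxL π ((ru i).left j ⊗ₜ[k] ((ru i).right j ⊗ₜ[k] r.right i)) :=
            Finset.sum_congr rfl fun i _ => Finset.sum_congr rfl fun j _ =>
              (auxL_tmul π _ _ _ (rd i j)).symm
        _ = ∑ i ∈ r.index, ∑ n ∈ (rv i).index,
              auxL π (r.left i ⊗ₜ[k] ((rv i).left n ⊗ₜ[k] (rv i).right n)) := h2
        _ = _ := Finset.sum_congr rfl fun i _ => Finset.sum_congr rfl fun n _ =>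
              auxL_tmul π _ _ _ (rr i n)
    have step3 : ∀ i : (H × H),
        (∑ n ∈ (rv i).index, ∑ m ∈ (rr i n).index,
          (r.left i * (𝐒 ((rr i n).right m) * (rv i).right n)) ⊗ₜ[k] π ((rr i n).left m)) =
        ∑ n ∈ (rv i).index, ∑ m ∈ (rs i n).index,
          (r.left i * (𝐒 ((rs i n).left m) * (rs i n).right m)) ⊗ₜ[k] π ((rv i).left n) := by
      intro i
      have h := congrArg (auxL' π (r.left i)) (Coalgebra.sum_tmul_tmul_eq (rv i) (rr i) (rs i))
      simp only [map_sum, auxL'_tmul] at h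
      exact h
    have step4 : ∀ i : (H × H),
        (∑ n ∈ (rv i).index, ∑ m ∈ (rs i n).index,
          (r.left i * (𝐒 ((rs i n).left m) * (rs i n).right m)) ⊗ₜ[k] π ((rv i).left n)) =
        r.left i ⊗ₜ[k] π (r.right i) := by
      intro i
      have hn : ∀ n : (H × H),
          (∑ m ∈ (rs i n).index,
            (r.left i * (𝐒 ((rs i n).left m) * (rs i n).right m)) ⊗ₜ[k] π ((rv i).left n)) =
          counit (R := k) ((rv i).right n) • (r.left i ⊗ₜ[k] π ((rv i).left n)) := by
        intro n
        rw [← TensorProduct.sum_tmul, ← Finset.mul_sum,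
          HopfAlgebra.sum_antipode_mul_eq_algebraMap_counit (rs i n), ← Algebra.commutes, ← Algebra.smul_def,
          TensorProduct.smul_tmul']
      calc (∑ n ∈ (rv i).index, ∑ m ∈ (rs i n).index,
            (r.left i * (𝐒 ((rs i n).left m) * (rs i n).right m)) ⊗ₜ[k] π ((rv i).left n))
          = ∑ n ∈ (rv i).index,
              counit (R := k) ((rv i).right n) • (r.left i ⊗ₜ[k] π ((rv i).left n)) :=
            Finset.sum_congr rfl fun n _ => hn n
        _ = r.left i ⊗ₜ[k] π (r.right i) := by
            conv_rhs => rw [← sum_counit_smul_left (rv i)]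
            rw [map_sum, TensorProduct.tmul_sum]
            exact Finset.sum_congr rfl fun n _ => by
              rw [map_smul, TensorProduct.tmul_smul]
    rw [step1, step2]
    calc (∑ i ∈ r.index, ∑ n ∈ (rv i).index, ∑ m ∈ (rr i n).index,
          (r.left i * (𝐒 ((rr i n).right m) * (rv i).right n)) ⊗ₜ[k] π ((rr i n).left m))
        = ∑ i ∈ r.index, r.left i ⊗ₜ[k] π (r.right i) :=
          Finset.sum_congr rfl fun i _ => (step3 i).trans (step4 i)
      _ = LinearMap.lTensor H π (Coalgebra.comul (R := k) a) := by
          conv_rhs => rw [← r.eq]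
          rw [map_sum]
          exact Finset.sum_congr rfl fun i _ => by rw [LinearMap.lTensor_tmul]
  rw [← hmain, hw, map_add, map_sum, auxT_one_tmul π hπ1 a]
  have hz : ∀ i ∈ t, auxT π (x i ⊗ₜ[k] y i) = 0 := fun i hi =>
    auxT_zero_of_auxG_zero π _ _ (hadl i hi)
  rw [Finset.sum_congr rfl hz, Finset.sum_const_zero, add_zero]

end Dir1

section Dir2

variable {k H K : Type*} [CommRing k] [Ring H] [HopfAlgebra k H] [Ring K] [Algebra k K]

local notation "𝐒" => (HopfAlgebra.antipode (R := k) (A := H))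

lemma sinv_antipode_mul (Sinv : H →ₗ[k] H) (h1 : ∀ h : H, Sinv (𝐒 h) = h)
    (h2 : ∀ h : H, 𝐒 (Sinv h) = h) (x y : H) : Sinv (x * 𝐒 y) = y * Sinv x := by
  have hinj : Function.Injective 𝐒 := fun u v huv => by rw [← h1 u, huv, h1]
  apply hinj
  rw [h2, antipode_mul'', h2]

lemma sinv_sum_repr (Sinv : H →ₗ[k] H) (h1 : ∀ h : H, Sinv (𝐒 h) = h)
    (h2 : ∀ h : H, 𝐒 (Sinv h) = h) {x : H} (r : Repr k x (H × H)) :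
    ∑ i ∈ r.index, Sinv (r.right i) * r.left i = algebraMap k H (counit (R := k) x) := by
  have hinj : Function.Injective 𝐒 := fun u v huv => by rw [← h1 u, huv, h1]
  apply hinj
  rw [map_sum]
  have hc : ∀ i ∈ r.index, 𝐒 (Sinv (r.right i) * r.left i) = 𝐒 (r.left i) * r.right i := by
    intro i _
    rw [antipode_mul'', h2]
  rw [Finset.sum_congr rfl hc, HopfAlgebra.sum_antipode_mul_eq_algebraMap_counit r,
    Algebra.algebraMap_eq_smul_one, map_smul, antipode_one'']

/-- `x ↦ Σ π(x₍₂₎) ⊗ S⁻¹(x₍₁₎S(x₍₃₎))`. -/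
noncomputable def auxQ (π : H →ₗ[k] K) (Sinv : H →ₗ[k] H) : H →ₗ[k] K ⊗[k] H :=
  TensorProduct.map π Sinv ∘ₗ adl k H

lemma auxQ_repr (π : H →ₗ[k] K) (Sinv : H →ₗ[k] H) (x : H) (r : Repr k x (H × H))
    (rd : ∀ i : (H × H), Repr k (r.right i) (H × H)) :
    auxQ π Sinv x = ∑ i ∈ r.index, ∑ j ∈ (rd i).index,
      π ((rd i).left j) ⊗ₜ[k] Sinv (r.left i * 𝐒 ((rd i).right j)) := by
  rw [auxQ]
  simp only [LinearMap.comp_apply]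
  rw [adl_repr x r rd]
  simp only [map_sum, TensorProduct.map_tmul]

/-- `y ⊗ x ↦ Σ π(x₍₂₎) ⊗ S⁻¹(x₍₁₎S(x₍₃₎))·y`. -/
noncomputable def auxT' (π : H →ₗ[k] K) (Sinv : H →ₗ[k] H) : H ⊗[k] H →ₗ[k] K ⊗[k] H :=
  LinearMap.lTensor K (LinearMap.mul' k H) ∘ₗ
  (TensorProduct.assoc k K H H).toLinearMap ∘ₗ
  LinearMap.rTensor H (auxQ π Sinv) ∘ₗ
  (TensorProduct.comm k H H).toLinearMap

lemma auxT'_tmul (π : H →ₗ[k] K) (Sinv : H →ₗ[k] H) (y x : H) (r : Repr k x (H × H))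
    (rd : ∀ i : (H × H), Repr k (r.right i) (H × H)) :
    auxT' π Sinv (y ⊗ₜ[k] x) = ∑ i ∈ r.index, ∑ j ∈ (rd i).index,
      π ((rd i).left j) ⊗ₜ[k] (Sinv (r.left i * 𝐒 ((rd i).right j)) * y) := by
  rw [auxT']
  simp only [LinearMap.comp_apply, LinearEquiv.coe_coe, TensorProduct.comm_tmul,
    LinearMap.rTensor_tmul]
  rw [auxQ_repr π Sinv x r rd]
  simp only [TensorProduct.sum_tmul, map_sum, TensorProduct.assoc_tmul,
    LinearMap.lTensor_tmul, LinearMap.mul'_apply]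

lemma auxT'_zero_of_auxQ_zero (π : H →ₗ[k] K) (Sinv : H →ₗ[k] H) (y x : H)
    (h : auxQ π Sinv x = 0) : auxT' π Sinv (y ⊗ₜ[k] x) = 0 := by
  rw [auxT']
  simp only [LinearMap.comp_apply, LinearEquiv.coe_coe, TensorProduct.comm_tmul,
    LinearMap.rTensor_tmul, h, TensorProduct.zero_tmul, map_zero]

lemma auxT'_tmul_one (π : H →ₗ[k] K) (Sinv : H →ₗ[k] H) (hπ1 : π 1 = 1)
    (h1 : ∀ h : H, Sinv (𝐒 h) = h) (y : H) :
    auxT' π Sinv (y ⊗ₜ[k] (1 : H)) = (1 : K) ⊗ₜ[k] y := by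
  have hs1 : Sinv (1 : H) = 1 := by
    have := h1 1
    rwa [antipode_one''] at this
  have hQ : auxQ π Sinv (1 : H) = (1 : K) ⊗ₜ[k] (1 : H) := by
    rw [auxQ]
    simp only [LinearMap.comp_apply, adl_one, TensorProduct.map_tmul, hπ1, hs1]
  rw [auxT']
  simp only [LinearMap.comp_apply, LinearEquiv.coe_coe, TensorProduct.comm_tmul,
    LinearMap.rTensor_tmul, hQ, TensorProduct.assoc_tmul, LinearMap.lTensor_tmul,
    LinearMap.mul'_apply, one_mul]

/-- `x ⊗ (y ⊗ w) ↦ Σ π(w₍₁₎) ⊗ (w₍₂₎·S⁻¹(y))·x`. -/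
noncomputable def auxM (π : H →ₗ[k] K) (Sinv : H →ₗ[k] H) :
    H ⊗[k] (H ⊗[k] H) →ₗ[k] K ⊗[k] H :=
  LinearMap.lTensor K (LinearMap.mul' k H) ∘ₗ
  (TensorProduct.assoc k K H H).toLinearMap ∘ₗ
  (TensorProduct.comm k H (K ⊗[k] H)).toLinearMap ∘ₗ
  LinearMap.lTensor H (TensorProduct.map π (LinearMap.mul' k H) ∘ₗ
    (TensorProduct.assoc k H H H).toLinearMap ∘ₗ
    (TensorProduct.comm k H (H ⊗[k] H)).toLinearMap ∘ₗ
    LinearMap.rTensor (H ⊗[k] H) Sinv) ∘ₗ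
  LinearMap.lTensor H (LinearMap.lTensor H Coalgebra.comul)

lemma auxM_tmul (π : H →ₗ[k] K) (Sinv : H →ₗ[k] H) (x y w : H) (rw' : Repr k w (H × H)) :
    auxM π Sinv (x ⊗ₜ[k] (y ⊗ₜ[k] w)) = ∑ m ∈ rw'.index,
      π (rw'.left m) ⊗ₜ[k] ((rw'.right m * Sinv y) * x) := by
  rw [auxM]
  simp only [LinearMap.comp_apply, LinearEquiv.coe_coe, LinearMap.lTensor_tmul]
  rw [← rw'.eq]
  simp only [TensorProduct.tmul_sum, map_sum, TensorProduct.sum_tmul,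
    LinearMap.rTensor_tmul, TensorProduct.comm_tmul, TensorProduct.assoc_tmul,
    TensorProduct.map_tmul, LinearMap.lTensor_tmul, LinearMap.mul'_apply,
    LinearMap.comp_apply, LinearEquiv.coe_coe]

lemma coinv_dir2 (π : H →ₗ[k] K) (hπ1 : π 1 = 1) (Sinv : H →ₗ[k] H)
    (h1 : ∀ h : H, Sinv (𝐒 h) = h) (h2 : ∀ h : H, 𝐒 (Sinv h) = h)
    {ι : Type*} (t : Finset ι) (x y : ι → H)
    (hq : ∀ i ∈ t, auxQ π Sinv (x i) = 0)
    (a : H) (hw : Coalgebra.comul (R := k) a = a ⊗ₜ[k] (1 : H) + ∑ i ∈ t, y i ⊗ₜ[k] x i) :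
    LinearMap.rTensor H π (Coalgebra.comul (R := k) a) = (1 : K) ⊗ₜ[k] a := by
  classical
  have hmain : auxT' π Sinv (Coalgebra.comul (R := k) a) =
      LinearMap.rTensor H π (Coalgebra.comul (R := k) a) := by
    have r := ℛ k a
    have ru : ∀ i : (H × H), Repr k (r.left i) (H × H) := fun i => ℛ k (r.left i)
    have rv : ∀ i : (H × H), Repr k (r.right i) (H × H) := fun i => ℛ k (r.right i)
    have rs : ∀ (i : (H × H)) (n : (H × H)), Repr k ((rv i).right n) (H × H) :=
      fun i n => ℛ k ((rv i).right n)
    have step1 : auxT' π Sinv (Coalgebra.comul (R := k) a) =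
        ∑ i ∈ r.index, ∑ n ∈ (rv i).index, ∑ m ∈ (rs i n).index,
          π ((rs i n).left m) ⊗ₜ[k]
            (((rs i n).right m * Sinv ((rv i).left n)) * r.left i) := by
      conv_lhs => rw [← r.eq]
      rw [map_sum]
      refine Finset.sum_congr rfl fun i _ => ?_
      rw [auxT'_tmul π Sinv (r.left i) (r.right i) (rv i) (rs i)]
      refine Finset.sum_congr rfl fun n _ => Finset.sum_congr rfl fun m _ => ?_
      rw [sinv_antipode_mul Sinv h1 h2]
    have key1 := Coalgebra.sum_tmul_tmul_eq r ru rv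
    have h3 := congrArg (auxM π Sinv) key1
    simp only [map_sum] at h3
    have step2 :
        (∑ i ∈ r.index, ∑ n ∈ (rv i).index, ∑ m ∈ (rs i n).index,
          π ((rs i n).left m) ⊗ₜ[k]
            (((rs i n).right m * Sinv ((rv i).left n)) * r.left i)) =
        ∑ i ∈ r.index, ∑ j ∈ (ru i).index, ∑ n ∈ (rv i).index,
          π ((rv i).left n) ⊗ₜ[k]
            (((rv i).right n * Sinv ((ru i).right j)) * (ru i).left j) := by
      calc (∑ i ∈ r.index, ∑ n ∈ (rv i).index, ∑ m ∈ (rs i n).index,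
            π ((rs i n).left m) ⊗ₜ[k]
              (((rs i n).right m * Sinv ((rv i).left n)) * r.left i))
          = ∑ i ∈ r.index, ∑ n ∈ (rv i).index,
              auxM π Sinv (r.left i ⊗ₜ[k] ((rv i).left n ⊗ₜ[k] (rv i).right n)) :=
            Finset.sum_congr rfl fun i _ => Finset.sum_congr rfl fun n _ =>
              (auxM_tmul π Sinv _ _ _ (rs i n)).symm
        _ = ∑ i ∈ r.index, ∑ j ∈ (ru i).index,
              auxM π Sinv ((ru i).left j ⊗ₜ[k] ((ru i).right j ⊗ₜ[k] r.right i)) := h3.symm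
        _ = _ := Finset.sum_congr rfl fun i _ => Finset.sum_congr rfl fun j _ =>
              auxM_tmul π Sinv _ _ _ (rv i)
    have step3 : ∀ i : (H × H),
        (∑ j ∈ (ru i).index, ∑ n ∈ (rv i).index,
          π ((rv i).left n) ⊗ₜ[k]
            (((rv i).right n * Sinv ((ru i).right j)) * (ru i).left j)) =
        counit (R := k) (r.left i) •
          LinearMap.rTensor H π (Coalgebra.comul (R := k) (r.right i)) := by
      intro i
      rw [Finset.sum_comm]
      have hn : ∀ n : (H × H),
          (∑ j ∈ (ru i).index,
            π ((rv i).left n) ⊗ₜ[k]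
              (((rv i).right n * Sinv ((ru i).right j)) * (ru i).left j)) =
          counit (R := k) (r.left i) • (π ((rv i).left n) ⊗ₜ[k] (rv i).right n) := by
        intro n
        rw [← TensorProduct.tmul_sum]
        have : (∑ j ∈ (ru i).index,
            ((rv i).right n * Sinv ((ru i).right j)) * (ru i).left j) =
            (rv i).right n * algebraMap k H (counit (R := k) (r.left i)) := by
          rw [← sinv_sum_repr Sinv h1 h2 (ru i), Finset.mul_sum]
          exact Finset.sum_congr rfl fun j _ => (mul_assoc _ _ _)
        rw [this, ← Algebra.commutes, ← Algebra.smul_def, TensorProduct.tmul_smul]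
      rw [Finset.sum_congr rfl fun n _ => hn n, ← Finset.smul_sum]
      congr 1
      conv_rhs => rw [← (rv i).eq]
      rw [map_sum]
      exact (Finset.sum_congr rfl fun n _ => by rw [LinearMap.rTensor_tmul]).symm
    rw [step1, step2]
    calc (∑ i ∈ r.index, ∑ j ∈ (ru i).index, ∑ n ∈ (rv i).index,
          π ((rv i).left n) ⊗ₜ[k]
            (((rv i).right n * Sinv ((ru i).right j)) * (ru i).left j))
        = ∑ i ∈ r.index, counit (R := k) (r.left i) •
            LinearMap.rTensor H π (Coalgebra.comul (R := k) (r.right i)) :=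
          Finset.sum_congr rfl fun i _ => step3 i
      _ = LinearMap.rTensor H π (Coalgebra.comul (R := k) a) := by
          conv_rhs => rw [← sum_counit_smul_right r]
          rw [map_sum, map_sum]
          exact Finset.sum_congr rfl fun i _ => by rw [map_smul, map_smul]
  rw [← hmain, hw, map_add, map_sum, auxT'_tmul_one π Sinv hπ1 h1 a]
  have hz : ∀ i ∈ t, auxT' π Sinv (y i ⊗ₜ[k] x i) = 0 := fun i hi =>
    auxT'_zero_of_auxQ_zero π Sinv _ _ (hq i hi)
  rw [Finset.sum_congr rfl hz, Finset.sum_const_zero, add_zero]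

end Dir2


/-- If `ker π` is left a-normal and the antipode of `H` is bijective, then the left
and right coinvariant subalgebras for `π` coincide. -/
theorem left_anormal_coinvariants_eq {k H K : Type*} [Field k] [Ring H] [Ring K]
    [HopfAlgebra k H] [HopfAlgebra k K] (π : H →ₐc[k] K)
    (hsurj : Function.Surjective π)
    (hSbij : Function.Bijective (HopfAlgebra.antipode (R := k) (A := H)))
    (hnormal : ∀ a ∈ LinearMap.ker π.toLinearMap,
      adl k H a ∈ LinearMap.range
        (TensorProduct.mapIncl (LinearMap.ker π.toLinearMap) (⊤ : Submodule k H))) :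
    {a : H | LinearMap.rTensor H π.toLinearMap (Coalgebra.comul a) = (1 : K) ⊗ₜ[k] a} =
    {a : H | LinearMap.lTensor H π.toLinearMap (Coalgebra.comul a) = a ⊗ₜ[k] (1 : K)} := by
  classical
  have hπ1 : π.toLinearMap (1 : H) = 1 := by
    rw [show (π.toLinearMap : H → K) = π from BialgHom.coe_toLinearMap π]
    exact map_one π
  -- the inverse of the antipode
  set e : H ≃ₗ[k] H :=
    LinearEquiv.ofBijective (HopfAlgebra.antipode (R := k) (A := H)) hSbij with he
  have h1 : ∀ h : H, e.symm.toLinearMap (HopfAlgebra.antipode (R := k) h) = h := by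
    intro h
    have : HopfAlgebra.antipode (R := k) h = e h := rfl
    rw [LinearEquiv.coe_toLinearMap, this, e.symm_apply_apply]
  have h2 : ∀ h : H, HopfAlgebra.antipode (R := k) (e.symm.toLinearMap h) = h := by
    intro h
    have : HopfAlgebra.antipode (R := k) (e.symm h) = e (e.symm h) := rfl
    rw [LinearEquiv.coe_toLinearMap, this, e.apply_symm_apply]
  -- normality consequences
  have hGzero : ∀ ξ : (LinearMap.ker π.toLinearMap : Submodule k H) ⊗[k] (⊤ : Submodule k H),
      LinearMap.lTensor H π.toLinearMap ((TensorProduct.comm k H H)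
        (TensorProduct.mapIncl (LinearMap.ker π.toLinearMap) (⊤ : Submodule k H) ξ)) = 0 := by
    intro ξ
    induction ξ using TensorProduct.induction_on with
    | zero => rw [map_zero, map_zero, map_zero]
    | tmul c d =>
        simp only [TensorProduct.mapIncl, TensorProduct.map_tmul, Submodule.coe_subtype,
          TensorProduct.comm_tmul, LinearMap.lTensor_tmul]
        rw [LinearMap.mem_ker.mp c.2, TensorProduct.tmul_zero]
    | add u v hu hv => rw [map_add, map_add, map_add, hu, hv, add_zero]
  have hG : ∀ x : H, x ∈ LinearMap.ker π.toLinearMap → auxG π.toLinearMap x = 0 := by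
    intro x hx
    obtain ⟨ξ, hξ⟩ := hnormal x hx
    rw [auxG]
    simp only [LinearMap.comp_apply, LinearEquiv.coe_coe]
    rw [← hξ]
    exact hGzero ξ
  have hQzero : ∀ ξ : (LinearMap.ker π.toLinearMap : Submodule k H) ⊗[k] (⊤ : Submodule k H),
      TensorProduct.map π.toLinearMap e.symm.toLinearMap
        (TensorProduct.mapIncl (LinearMap.ker π.toLinearMap) (⊤ : Submodule k H) ξ) = 0 := by
    intro ξ
    induction ξ using TensorProduct.induction_on with
    | zero => rw [map_zero, map_zero]
    | tmul c d =>
        simp only [TensorProduct.mapIncl, TensorProduct.map_tmul, Submodule.coe_subtype]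
        rw [LinearMap.mem_ker.mp c.2, TensorProduct.zero_tmul]
    | add u v hu hv => rw [map_add, map_add, hu, hv, add_zero]
  have hQ : ∀ x : H, x ∈ LinearMap.ker π.toLinearMap →
      auxQ π.toLinearMap e.symm.toLinearMap x = 0 := by
    intro x hx
    obtain ⟨ξ, hξ⟩ := hnormal x hx
    rw [auxQ]
    simp only [LinearMap.comp_apply]
    rw [← hξ]
    exact hQzero ξ
  ext a
  simp only [Set.mem_setOf_eq]
  constructor
  · intro ha
    have h0 : LinearMap.rTensor H π.toLinearMap
        (Coalgebra.comul (R := k) a - (1 : H) ⊗ₜ[k] a) = 0 := by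
      rw [map_sub, ha, LinearMap.rTensor_tmul, hπ1, sub_self]
    have hexact := Module.Flat.rTensor_exact (M := H)
      (LinearMap.exact_subtype_ker_map π.toLinearMap)
    obtain ⟨w₀, hw₀⟩ := (hexact _).mp h0
    obtain ⟨sfin, hsfin⟩ := TensorProduct.exists_finset w₀
    have hw : Coalgebra.comul (R := k) a =
        (1 : H) ⊗ₜ[k] a + ∑ p ∈ sfin, ((p.1 : H) ⊗ₜ[k] p.2) := by
      rw [hsfin, map_sum] at hw₀
      simp only [LinearMap.rTensor_tmul, Submodule.coe_subtype] at hw₀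
      rw [hw₀]
      abel
    exact coinv_dir1 π.toLinearMap hπ1 sfin (fun p => (p.1 : H)) (fun p => p.2)
      (fun p _ => hG _ p.1.2) a hw
  · intro ha
    have h0 : LinearMap.lTensor H π.toLinearMap
        (Coalgebra.comul (R := k) a - a ⊗ₜ[k] (1 : H)) = 0 := by
      rw [map_sub, ha, LinearMap.lTensor_tmul, hπ1, sub_self]
    have hexact := Module.Flat.lTensor_exact (M := H)
      (LinearMap.exact_subtype_ker_map π.toLinearMap)
    obtain ⟨w₀, hw₀⟩ := (hexact _).mp h0
    obtain ⟨sfin, hsfin⟩ := TensorProduct.exists_finset w₀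
    have hw : Coalgebra.comul (R := k) a =
        a ⊗ₜ[k] (1 : H) + ∑ p ∈ sfin, (p.1 ⊗ₜ[k] (p.2 : H)) := by
      rw [hsfin, map_sum] at hw₀
      simp only [LinearMap.lTensor_tmul, Submodule.coe_subtype] at hw₀
      rw [hw₀]
      abel
    exact coinv_dir2 π.toLinearMap hπ1 e.symm.toLinearMap h1 h2 sfin
      (fun p => (p.2 : H)) (fun p => p.1) (fun p _ => hQ _ p.2.2) a hw
end

section
/- Let H, K be Hopf algebras over a field k, π : H → K a surjective Hopf algebra morphism, and s : K → H a k-linear right K-comodule map splitting π (i.e. π ∘ s = id_K and (id ⊗ π)Δ_H ∘ s = (s ⊗ id)Δ_K). Define φ : H → H by φ(a) = Σ s(π(a_(1))) S(a_(2)). Then (id ⊗ π)Δ_H(φ(a)) = φ(a) ⊗ 1 for all a ∈ H, i.e. φ maps H into the right coinvariants H^{co K}. -/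
open TensorProduct Coalgebra HopfAlgebra

namespace PhiAux

variable {k : Type*} [CommSemiring k]

section Conv
variable {C : Type*} [AddCommMonoid C] [Module k C] [Coalgebra k C]
variable {A : Type*} [Semiring A] [Algebra k A]

/-- Convolution product on `Hom(C, A)`. -/
noncomputable def conv (f g : C →ₗ[k] A) : C →ₗ[k] A :=
  LinearMap.mul' k A ∘ₗ TensorProduct.map f g ∘ₗ Coalgebra.comul

/-- Convolution unit. -/
noncomputable def cunit : C →ₗ[k] A := Algebra.linearMap k A ∘ₗ Coalgebra.counit

lemma conv_assoc (f g h : C →ₗ[k] A) : conv (conv f g) h = conv f (conv g h) := by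
  have key : LinearMap.mul' k A ∘ₗ
      TensorProduct.map (LinearMap.mul' k A ∘ₗ TensorProduct.map f g) h =
      (LinearMap.mul' k A ∘ₗ
        TensorProduct.map f (LinearMap.mul' k A ∘ₗ TensorProduct.map g h)) ∘ₗ
        (TensorProduct.assoc k C C C).toLinearMap := by
    apply TensorProduct.ext_threefold
    intro x y z
    simp [mul_assoc]
  have canL : conv (conv f g) h =
      (LinearMap.mul' k A ∘ₗ
        TensorProduct.map (LinearMap.mul' k A ∘ₗ TensorProduct.map f g) h) ∘ₗ
        Coalgebra.comul.rTensor C ∘ₗ Coalgebra.comul := by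
    unfold conv
    rw [LinearMap.rTensor]
    have h1 : TensorProduct.map ((LinearMap.mul' k A ∘ₗ TensorProduct.map f g) ∘ₗ
        Coalgebra.comul) (h ∘ₗ LinearMap.id) =
        TensorProduct.map (LinearMap.mul' k A ∘ₗ TensorProduct.map f g) h ∘ₗ
          TensorProduct.map Coalgebra.comul LinearMap.id :=
      TensorProduct.map_comp _ _ _ _
    rw [LinearMap.comp_id] at h1
    simp only [← LinearMap.comp_assoc]
    rw [LinearMap.comp_assoc (TensorProduct.map _ _) _ _, h1]
  have canR : conv f (conv g h) =
      (LinearMap.mul' k A ∘ₗ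
        TensorProduct.map f (LinearMap.mul' k A ∘ₗ TensorProduct.map g h)) ∘ₗ
        Coalgebra.comul.lTensor C ∘ₗ Coalgebra.comul := by
    unfold conv
    rw [LinearMap.lTensor]
    have h1 : TensorProduct.map (f ∘ₗ LinearMap.id) ((LinearMap.mul' k A ∘ₗ
        TensorProduct.map g h) ∘ₗ Coalgebra.comul) =
        TensorProduct.map f (LinearMap.mul' k A ∘ₗ TensorProduct.map g h) ∘ₗ
          TensorProduct.map LinearMap.id Coalgebra.comul :=
      TensorProduct.map_comp _ _ _ _
    rw [LinearMap.comp_id] at h1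
    simp only [← LinearMap.comp_assoc]
    rw [LinearMap.comp_assoc (TensorProduct.map _ _) _ _, h1]
  rw [canL, canR, key, LinearMap.comp_assoc]
  congr 1
  exact Coalgebra.coassoc (R := k)

lemma conv_cunit_left (f : C →ₗ[k] A) : conv cunit f = f := by
  unfold conv cunit
  have h1 : TensorProduct.map (Algebra.linearMap k A ∘ₗ (Coalgebra.counit : C →ₗ[k] k))
      (f ∘ₗ LinearMap.id) =
      TensorProduct.map (Algebra.linearMap k A) f ∘ₗ
        TensorProduct.map (Coalgebra.counit : C →ₗ[k] k) (LinearMap.id : C →ₗ[k] C) :=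
    TensorProduct.map_comp (Algebra.linearMap k A) f Coalgebra.counit LinearMap.id
  rw [LinearMap.comp_id] at h1
  rw [h1]
  rw [show TensorProduct.map (Coalgebra.counit (R := k) (A := C)) LinearMap.id =
    (Coalgebra.counit (R := k) (A := C)).rTensor C from rfl]
  simp only [LinearMap.comp_assoc]
  rw [Coalgebra.rTensor_counit_comp_comul]
  apply LinearMap.ext
  intro a
  simp

lemma conv_cunit_right (f : C →ₗ[k] A) : conv f cunit = f := by
  unfold conv cunit
  have h1 : TensorProduct.map (f ∘ₗ LinearMap.id)
      (Algebra.linearMap k A ∘ₗ (Coalgebra.counit : C →ₗ[k] k)) =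
      TensorProduct.map f (Algebra.linearMap k A) ∘ₗ
        TensorProduct.map (LinearMap.id : C →ₗ[k] C) (Coalgebra.counit : C →ₗ[k] k) :=
    TensorProduct.map_comp f (Algebra.linearMap k A) LinearMap.id Coalgebra.counit
  rw [LinearMap.comp_id] at h1
  rw [h1]
  rw [show TensorProduct.map (LinearMap.id : C →ₗ[k] C)
      (Coalgebra.counit (R := k) (A := C)) =
    (Coalgebra.counit (R := k) (A := C)).lTensor C from rfl]
  simp only [LinearMap.comp_assoc]
  rw [Coalgebra.lTensor_counit_comp_comul]
  apply LinearMap.ext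
  intro a
  simp [Algebra.commutes]

section Post
variable {B : Type*} [Semiring B] [Algebra k B]

lemma algHom_comp_conv (m : A →ₐ[k] B) (f g : C →ₗ[k] A) :
    m.toLinearMap ∘ₗ conv f g = conv (m.toLinearMap ∘ₗ f) (m.toLinearMap ∘ₗ g) := by
  unfold conv
  have key : m.toLinearMap ∘ₗ LinearMap.mul' k A =
      LinearMap.mul' k B ∘ₗ TensorProduct.map m.toLinearMap m.toLinearMap := by
    apply TensorProduct.ext'
    intro x y
    simp
  have h1 : TensorProduct.map (m.toLinearMap ∘ₗ f) (m.toLinearMap ∘ₗ g) =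
      TensorProduct.map m.toLinearMap m.toLinearMap ∘ₗ TensorProduct.map f g :=
    TensorProduct.map_comp _ _ _ _
  rw [h1]
  simp only [← LinearMap.comp_assoc]
  rw [key]

lemma algHom_comp_cunit (m : A →ₐ[k] B) :
    m.toLinearMap ∘ₗ (cunit : C →ₗ[k] A) = cunit := by
  unfold cunit
  rw [← LinearMap.comp_assoc]
  congr 1
  apply LinearMap.ext
  intro r
  simp

end Post

section Pre
variable {H K : Type*} [Semiring H] [Semiring K] [Bialgebra k H] [Bialgebra k K]
  (π : H →ₐc[k] K)

lemma bialg_map_comp_comul :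
    TensorProduct.map π.toLinearMap π.toLinearMap ∘ₗ Coalgebra.comul =
      Coalgebra.comul ∘ₗ π.toLinearMap := by
  have := CoalgHomClass.map_comp_comul (F := H →ₐc[k] K) π
  convert this using 2 <;> rfl

lemma bialg_counit_comp :
    (Coalgebra.counit : K →ₗ[k] k) ∘ₗ π.toLinearMap = Coalgebra.counit := by
  have := CoalgHomClass.counit_comp (F := H →ₐc[k] K) π
  convert this using 2 <;> rfl

lemma conv_comp_bialgHom (f g : K →ₗ[k] A) :
    conv (f ∘ₗ π.toLinearMap) (g ∘ₗ π.toLinearMap) = (conv f g) ∘ₗ π.toLinearMap := by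
  unfold conv
  have h1 : TensorProduct.map (f ∘ₗ π.toLinearMap) (g ∘ₗ π.toLinearMap) =
      TensorProduct.map f g ∘ₗ TensorProduct.map π.toLinearMap π.toLinearMap :=
    TensorProduct.map_comp _ _ _ _
  rw [h1]
  simp only [LinearMap.comp_assoc]
  congr 1
  congr 1
  exact bialg_map_comp_comul π

lemma cunit_comp_bialgHom : (cunit : K →ₗ[k] A) ∘ₗ π.toLinearMap = cunit := by
  unfold cunit
  rw [LinearMap.comp_assoc]
  congr 1
  exact bialg_counit_comp π

end Pre

section Hopf
variable {H : Type*} [Semiring H] [HopfAlgebra k H]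

lemma conv_antipode_id :
    conv (HopfAlgebra.antipode (R := k) (A := H)) LinearMap.id = cunit := by
  unfold conv cunit
  rw [show TensorProduct.map (HopfAlgebra.antipode (R := k) (A := H))
      (LinearMap.id : H →ₗ[k] H) = (HopfAlgebra.antipode (R := k) (A := H)).rTensor H
    from rfl]
  exact HopfAlgebra.mul_antipode_rTensor_comul

lemma conv_id_antipode :
    conv LinearMap.id (HopfAlgebra.antipode (R := k) (A := H)) = cunit := by
  unfold conv cunit
  rw [show TensorProduct.map (LinearMap.id : H →ₗ[k] H)
      (HopfAlgebra.antipode (R := k) (A := H)) =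
      (HopfAlgebra.antipode (R := k) (A := H)).lTensor H from rfl]
  exact HopfAlgebra.mul_antipode_lTensor_comul

lemma conv_algHom_antipode (m : H →ₐ[k] A) :
    conv m.toLinearMap (m.toLinearMap ∘ₗ HopfAlgebra.antipode (R := k)) = cunit := by
  have := algHom_comp_conv m LinearMap.id (HopfAlgebra.antipode (R := k) (A := H))
  rw [conv_id_antipode, algHom_comp_cunit, LinearMap.comp_id] at this
  exact this.symm

lemma conv_antipode_algHom (m : H →ₐ[k] A) :
    conv (m.toLinearMap ∘ₗ HopfAlgebra.antipode (R := k)) m.toLinearMap = cunit := by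
  have := algHom_comp_conv m (HopfAlgebra.antipode (R := k) (A := H)) LinearMap.id
  rw [conv_antipode_id, algHom_comp_cunit, LinearMap.comp_id] at this
  exact this.symm

end Hopf

section Main
variable {H K : Type*} [Semiring H] [Semiring K] [HopfAlgebra k H] [HopfAlgebra k K]
  (π : H →ₐc[k] K)

noncomputable def eL : H →ₐ[k] H ⊗[k] K := Algebra.TensorProduct.includeLeft
noncomputable def iR : K →ₐ[k] H ⊗[k] K := Algebra.TensorProduct.includeRight
noncomputable def πA : H →ₐ[k] K := π
noncomputable def ρA : H →ₐ[k] H ⊗[k] K :=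
  (Algebra.TensorProduct.map (AlgHom.id k H) (πA π)).comp (Bialgebra.comulAlgHom k H)

lemma ρA_toLinearMap :
    (ρA π).toLinearMap = LinearMap.lTensor H π.toLinearMap ∘ₗ Coalgebra.comul := by
  have h1 : (Algebra.TensorProduct.map (AlgHom.id k H) (πA π)).toLinearMap =
      LinearMap.lTensor H π.toLinearMap := by
    apply TensorProduct.ext'
    intro x y
    simp [πA]
    rfl
  apply LinearMap.ext
  intro a
  have : (ρA π) a = (Algebra.TensorProduct.map (AlgHom.id k H) (πA π))
      (Coalgebra.comul a) := rfl
  rw [LinearMap.comp_apply, ← h1]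
  exact this

lemma mul_incl :
    LinearMap.mul' k (H ⊗[k] K) ∘ₗ
      TensorProduct.map (eL (k := k) (H := H) (K := K)).toLinearMap
        (iR (k := k) (H := H) (K := K)).toLinearMap = LinearMap.id := by
  apply TensorProduct.ext'
  intro x y
  simp [eL, iR, Algebra.TensorProduct.tmul_mul_tmul]

lemma incl_conv (w : H →ₗ[k] H) (v : H →ₗ[k] K) :
    conv ((eL (k := k) (H := H) (K := K)).toLinearMap ∘ₗ w)
      ((iR (k := k) (H := H) (K := K)).toLinearMap ∘ₗ v) =
      TensorProduct.map w v ∘ₗ Coalgebra.comul := by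
  unfold conv
  rw [TensorProduct.map_comp (eL (k := k)).toLinearMap (iR (k := k)).toLinearMap w v]
  simp only [← LinearMap.comp_assoc]
  rw [mul_incl]
  simp only [LinearMap.id_comp]

end Main
end Conv
end PhiAux

open PhiAux in
/-- If `s : K → H` is a right `K`-comodule splitting of a surjective Hopf algebra
morphism `π : H → K`, then `φ(a) = Σ s(π(a₍₁₎)) S(a₍₂₎)` takes values in the right
coinvariants `H^{co K}`. -/
theorem phi_mem_coinvariants {k H K : Type*} [Field k] [Ring H] [Ring K]
    [HopfAlgebra k H] [HopfAlgebra k K] (π : H →ₐc[k] K)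
    (hsurj : Function.Surjective π)
    (s : K →ₗ[k] H) (hsplit : π.toLinearMap ∘ₗ s = LinearMap.id)
    (hcomod : (LinearMap.lTensor H π.toLinearMap) ∘ₗ Coalgebra.comul ∘ₗ s =
      (LinearMap.rTensor K s) ∘ₗ Coalgebra.comul)
    (φ : H →ₗ[k] H)
    (hφ : φ = LinearMap.mul' k H ∘ₗ
      TensorProduct.map (s ∘ₗ π.toLinearMap) (HopfAlgebra.antipode (R := k)) ∘ₗ
      Coalgebra.comul) :
    ∀ a : H,
      LinearMap.lTensor H π.toLinearMap (Coalgebra.comul (φ a)) = φ a ⊗ₜ[k] (1 : K) := by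
  set π' : H →ₗ[k] K := π.toLinearMap with hπ'
  set SH : H →ₗ[k] H := HopfAlgebra.antipode (R := k) with hSH
  set SK : K →ₗ[k] K := HopfAlgebra.antipode (R := k) with hSK
  set e : H →ₗ[k] H ⊗[k] K := (eL (k := k) (H := H) (K := K)).toLinearMap with he
  set i : K →ₗ[k] H ⊗[k] K := (iR (k := k) (H := H) (K := K)).toLinearMap with hi
  set ρ : H →ₗ[k] H ⊗[k] K := LinearMap.lTensor H π' ∘ₗ Coalgebra.comul with hρ
  have hρA : (ρA π).toLinearMap = ρ := ρA_toLinearMap π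
  -- φ is a convolution product
  have hφ' : φ = conv (s ∘ₗ π') SH := hφ
  -- ρ = e ⋆ (i ∘ π)
  have hrho : ρ = conv e (i ∘ₗ π') := by
    have := incl_conv (k := k) (H := H) (K := K) LinearMap.id π'
    rw [LinearMap.comp_id] at this
    rw [← he, ← hi] at this
    rw [this]
    rfl
  -- (i∘π) ⋆ ((i∘SK)∘π) = 1
  have hpq : conv (i ∘ₗ π') ((i ∘ₗ SK) ∘ₗ π') = cunit := by
    rw [conv_comp_bialgHom π i (i ∘ₗ SK), conv_algHom_antipode (iR (k := k)),
      cunit_comp_bialgHom]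
  -- (ρ∘SH) ⋆ ρ = 1
  have hrinv : conv (ρ ∘ₗ SH) ρ = cunit := by
    have := conv_antipode_algHom (ρA π)
    rwa [hρA] at this
  -- e ⋆ (e∘SH) = 1
  have heinv : conv e (e ∘ₗ SH) = cunit := conv_algHom_antipode (eL (k := k))
  -- ρ ∘ s ∘ π = (e∘s∘π) ⋆ (i∘π)
  have h2 : TensorProduct.map (s ∘ₗ π') π' =
      LinearMap.rTensor K s ∘ₗ TensorProduct.map π' π' := by
    have := TensorProduct.map_comp s (LinearMap.id : K →ₗ[k] K) π' π'
    rw [LinearMap.id_comp] at this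
    rw [this]
    rfl
  have hrs1 : ρ ∘ₗ s = LinearMap.rTensor K s ∘ₗ Coalgebra.comul := by
    rw [hρ, LinearMap.comp_assoc]
    exact hcomod
  have hrs2 : Coalgebra.comul ∘ₗ π' = TensorProduct.map π' π' ∘ₗ Coalgebra.comul := by
    rw [hπ']
    exact (bialg_map_comp_comul π).symm
  have hrs : ρ ∘ₗ (s ∘ₗ π') = conv (e ∘ₗ (s ∘ₗ π')) (i ∘ₗ π') := by
    calc ρ ∘ₗ (s ∘ₗ π') = (ρ ∘ₗ s) ∘ₗ π' := (LinearMap.comp_assoc _ _ _).symm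
      _ = (LinearMap.rTensor K s ∘ₗ Coalgebra.comul) ∘ₗ π' := by rw [hrs1]
      _ = LinearMap.rTensor K s ∘ₗ (Coalgebra.comul ∘ₗ π') := LinearMap.comp_assoc _ _ _
      _ = LinearMap.rTensor K s ∘ₗ (TensorProduct.map π' π' ∘ₗ Coalgebra.comul) := by
          rw [hrs2]
      _ = (LinearMap.rTensor K s ∘ₗ TensorProduct.map π' π') ∘ₗ Coalgebra.comul :=
          (LinearMap.comp_assoc _ _ _).symm
      _ = TensorProduct.map (s ∘ₗ π') π' ∘ₗ Coalgebra.comul := by rw [← h2]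
      _ = conv (e ∘ₗ (s ∘ₗ π')) (i ∘ₗ π') := (incl_conv _ _).symm
  -- ρ ∘ φ = (ρ∘s∘π) ⋆ (ρ∘SH)
  have hrphi : ρ ∘ₗ φ = conv (ρ ∘ₗ (s ∘ₗ π')) (ρ ∘ₗ SH) := by
    rw [hφ']
    have := algHom_comp_conv (ρA π) (s ∘ₗ π') SH
    rwa [hρA] at this
  -- ρ ∘ SH = ((i∘SK)∘π) ⋆ (e∘SH)
  have hrinv2 : ρ ∘ₗ SH = conv ((i ∘ₗ SK) ∘ₗ π') (e ∘ₗ SH) := by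
    have hright : conv ρ (conv ((i ∘ₗ SK) ∘ₗ π') (e ∘ₗ SH)) = cunit := by
      rw [hrho, conv_assoc, ← conv_assoc (i ∘ₗ π'), hpq, conv_cunit_left, heinv]
    calc ρ ∘ₗ SH = conv (ρ ∘ₗ SH) cunit := (conv_cunit_right _).symm
      _ = conv (ρ ∘ₗ SH) (conv ρ (conv ((i ∘ₗ SK) ∘ₗ π') (e ∘ₗ SH))) := by rw [hright]
      _ = conv (conv (ρ ∘ₗ SH) ρ) (conv ((i ∘ₗ SK) ∘ₗ π') (e ∘ₗ SH)) :=
          (conv_assoc _ _ _).symm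
      _ = conv ((i ∘ₗ SK) ∘ₗ π') (e ∘ₗ SH) := by rw [hrinv, conv_cunit_left]
  -- final: ρ ∘ φ = e ∘ φ
  have hfinal : ρ ∘ₗ φ = e ∘ₗ φ := by
    rw [hrphi, hrs, hrinv2]
    rw [conv_assoc, ← conv_assoc (i ∘ₗ π'), hpq, conv_cunit_left]
    have := algHom_comp_conv (eL (k := k) (H := H) (K := K)) (s ∘ₗ π') SH
    rw [← he] at this
    rw [← this, ← hφ']
  intro a
  have h1 : LinearMap.lTensor H π.toLinearMap (Coalgebra.comul (φ a)) = (ρ ∘ₗ φ) a := rfl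
  rw [h1, hfinal]
  simp [he, eL]
end

section
/- Let H be a Hopf algebra, and let π : H → K and θ : H → L be surjective Hopf algebra morphisms with ker(θ) ⊆ ker(π); let π₁ : L → K be the induced surjection with π = π₁ ∘ θ. If ker(π) is a-normal in H (i.e. ad_l and ad_r of H preserve ker(π) ⊗ H), then ker(π₁) is a-normal in L. -/
open TensorProduct Coalgebra HopfAlgebra

section AntipodeNaturality

variable {k H L : Type*} [CommRing k] [Ring H] [Ring L]
  [HopfAlgebra k H] [HopfAlgebra k L] (f : H →ₐc[k] L)

lemma BialgHom.helper1' (x : H) {ι : Type*} (s : Coalgebra.Repr k x ι) :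
    ∑ j ∈ s.index, f (s.left j) * antipode (R := k) (f (s.right j)) =
      algebraMap k L (counit (R := k) x) := by
  have h := HopfAlgebra.mul_antipode_lTensor_comul_apply (R := k) (f x)
  rw [← CoalgHomClass.map_comp_comul_apply f x, ← s.eq] at h
  rw [CoalgHomClass.counit_comp_apply f x] at h
  simp only [map_sum, TensorProduct.map_tmul, LinearMap.lTensor_tmul,
    LinearMap.mul'_apply, LinearMap.coe_coe] at h
  exact h

lemma BialgHom.helper2' (x : H) {ι : Type*} (s : Coalgebra.Repr k x ι) :
    ∑ j ∈ s.index, f (antipode (R := k) (s.left j)) * f (s.right j) =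
      algebraMap k L (counit (R := k) x) := by
  have h := HopfAlgebra.mul_antipode_rTensor_comul_apply (R := k) x
  rw [← s.eq] at h
  simp only [map_sum, LinearMap.rTensor_tmul, LinearMap.mul'_apply] at h
  have h2 := congrArg f h
  simp only [map_sum, map_mul, AlgHomClass.commutes] at h2
  exact h2

lemma sum_counit_right_smul_left' {a : H} {ι : Type*} (r : Coalgebra.Repr k a ι) :
    ∑ i ∈ r.index, counit (R := k) (r.right i) • r.left i = a := by
  have h := congrArg (TensorProduct.rid k H) (Coalgebra.sum_tmul_counit_eq (R := k) r)
  simp only [map_sum, TensorProduct.rid_tmul, one_smul] at h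
  exact h

lemma sum_counit_left_smul_right' {a : H} {ι : Type*} (r : Coalgebra.Repr k a ι) :
    ∑ i ∈ r.index, counit (R := k) (r.left i) • r.right i = a := by
  have h := congrArg (TensorProduct.lid k H) (Coalgebra.sum_counit_tmul_eq (R := k) r)
  simp only [map_sum, TensorProduct.lid_tmul, one_smul] at h
  exact h

theorem BialgHom.map_antipode' (a : H) :
    f (antipode (R := k) a) = antipode (R := k) (f a) := by
  set r := ℛ k a with hr
  set r₁ : ∀ i, Coalgebra.Repr k (r.left i) (H × H) := fun i => ℛ k (r.left i)
  set r₂ : ∀ i, Coalgebra.Repr k (r.right i) (H × H) := fun i => ℛ k (r.right i)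
  have key := Coalgebra.sum_map_tmul_tmul_eq
    ((f : H →ₗ[k] L) ∘ₗ (antipode (R := k) : H →ₗ[k] H)) (f : H →ₗ[k] L)
    ((antipode (R := k) : L →ₗ[k] L) ∘ₗ (f : H →ₗ[k] L)) a (repr := r)
    (a₁ := r₁) (a₂ := r₂)
  have key2 := congrArg (LinearMap.mul' k L ∘ₗ LinearMap.lTensor L (LinearMap.mul' k L)) key
  simp only [map_sum, LinearMap.comp_apply, LinearMap.lTensor_tmul,
    LinearMap.mul'_apply, BialgHom.coe_toLinearMap, LinearMap.coe_coe] at key2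
  have lhs : ∑ i ∈ r.index, ∑ j ∈ (r₂ i).index,
      f (antipode (R := k) (r.left i)) * (f ((r₂ i).left j) *
        antipode (R := k) (f ((r₂ i).right j))) = f (antipode (R := k) a) := by
    calc ∑ i ∈ r.index, ∑ j ∈ (r₂ i).index,
        f (antipode (R := k) (r.left i)) * (f ((r₂ i).left j) *
          antipode (R := k) (f ((r₂ i).right j)))
        = ∑ i ∈ r.index, f (antipode (R := k) (r.left i)) *
            algebraMap k L (counit (R := k) (r.right i)) := by
          refine Finset.sum_congr rfl fun i _ => ?_
          rw [← Finset.mul_sum, BialgHom.helper1' f (r.right i) (r₂ i)]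
      _ = ∑ i ∈ r.index, counit (R := k) (r.right i) • f (antipode (R := k) (r.left i)) := by
          refine Finset.sum_congr rfl fun i _ => ?_
          rw [Algebra.smul_def, Algebra.commutes]
      _ = f (antipode (R := k) (∑ i ∈ r.index, counit (R := k) (r.right i) • r.left i)) := by
          simp [map_sum, map_smul]
      _ = f (antipode (R := k) a) := by rw [sum_counit_right_smul_left' r]
  have rhs : ∑ i ∈ r.index, ∑ j ∈ (r₁ i).index,
      f (antipode (R := k) ((r₁ i).left j)) * (f ((r₁ i).right j) *
        antipode (R := k) (f (r.right i))) = antipode (R := k) (f a) := by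
    calc ∑ i ∈ r.index, ∑ j ∈ (r₁ i).index,
        f (antipode (R := k) ((r₁ i).left j)) * (f ((r₁ i).right j) *
          antipode (R := k) (f (r.right i)))
        = ∑ i ∈ r.index, algebraMap k L (counit (R := k) (r.left i)) *
            antipode (R := k) (f (r.right i)) := by
          refine Finset.sum_congr rfl fun i _ => ?_
          rw [← BialgHom.helper2' f (r.left i) (r₁ i), Finset.sum_mul]
          simp [mul_assoc]
      _ = ∑ i ∈ r.index, counit (R := k) (r.left i) • antipode (R := k) (f (r.right i)) := by
          simp [Algebra.smul_def]
      _ = antipode (R := k) (f (∑ i ∈ r.index, counit (R := k) (r.left i) • r.right i)) := by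
          simp [map_sum, map_smul]
      _ = antipode (R := k) (f a) := by rw [sum_counit_left_smul_right' r]
  rw [← lhs, ← rhs]
  exact key2

end AntipodeNaturality

section ReprLemmas

variable {k H : Type*} [CommRing k] [Ring H] [Bialgebra k H] (S : H →ₗ[k] H)

lemma adlWith_repr {a : H} {ι κ : Type*} (r : Coalgebra.Repr k a ι)
    (r₂ : ∀ i, Coalgebra.Repr k (r.right i) κ) :
    adlWith k H S a = ∑ i ∈ r.index, ∑ j ∈ (r₂ i).index,
      (r₂ i).left j ⊗ₜ[k] (r.left i * S ((r₂ i).right j)) := by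
  simp only [adlWith, LinearMap.comp_apply]
  rw [← r.eq, map_sum]
  simp only [LinearMap.lTensor_tmul]
  have : ∀ i ∈ r.index, (r.left i) ⊗ₜ[k] (Coalgebra.comul (R := k) (r.right i)) =
      ∑ j ∈ (r₂ i).index, r.left i ⊗ₜ[k] ((r₂ i).left j ⊗ₜ[k] (r₂ i).right j) := by
    intro i _
    rw [← (r₂ i).eq, TensorProduct.tmul_sum]
  rw [Finset.sum_congr rfl this]
  simp only [map_sum, LinearMap.lTensor_tmul, LinearEquiv.coe_coe,
    TensorProduct.assoc_symm_tmul, LinearMap.rTensor_tmul, TensorProduct.comm_tmul,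
    TensorProduct.assoc_tmul, LinearMap.mul'_apply]

lemma adrWith_repr {a : H} {ι κ : Type*} (r : Coalgebra.Repr k a ι)
    (r₂ : ∀ i, Coalgebra.Repr k (r.right i) κ) :
    adrWith k H S a = ∑ i ∈ r.index, ∑ j ∈ (r₂ i).index,
      (r₂ i).left j ⊗ₜ[k] (S (r.left i) * (r₂ i).right j) := by
  simp only [adrWith, LinearMap.comp_apply]
  rw [← r.eq, map_sum]
  simp only [LinearMap.lTensor_tmul]
  have : ∀ i ∈ r.index, (r.left i) ⊗ₜ[k] (Coalgebra.comul (R := k) (r.right i)) =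
      ∑ j ∈ (r₂ i).index, r.left i ⊗ₜ[k] ((r₂ i).left j ⊗ₜ[k] (r₂ i).right j) := by
    intro i _
    rw [← (r₂ i).eq, TensorProduct.tmul_sum]
  rw [Finset.sum_congr rfl this]
  simp only [map_sum, LinearMap.rTensor_tmul, LinearEquiv.coe_coe,
    TensorProduct.assoc_symm_tmul, TensorProduct.comm_tmul,
    TensorProduct.assoc_tmul, LinearMap.lTensor_tmul, LinearMap.mul'_apply]

end ReprLemmas

section Naturality

variable {k H L : Type*} [CommRing k] [Ring H] [Ring L]
  [HopfAlgebra k H] [HopfAlgebra k L]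

/-- pushforward of a Sweedler representation along a bialgebra morphism -/
noncomputable def Coalgebra.Repr.push (θ : H →ₐc[k] L) {a : H} {ι : Type*} (r : Coalgebra.Repr k a ι) :
    Coalgebra.Repr k (θ a) ι where
  index := r.index
  left := fun i => θ (r.left i)
  right := fun i => θ (r.right i)
  eq := by
    have h := CoalgHomClass.map_comp_comul_apply θ a
    rw [← r.eq, map_sum] at h
    simpa using h

lemma map_adl (θ : H →ₐc[k] L) (a : H) :
    TensorProduct.map θ.toLinearMap θ.toLinearMap (adl k H a) = adl k L (θ a) := by
  set r := ℛ k a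
  set r₂ : ∀ i, Coalgebra.Repr k (r.right i) (H × H) := fun i => ℛ k (r.right i)
  rw [adl, adl, adlWith_repr _ r r₂,
    adlWith_repr (HopfAlgebra.antipode (R := k)) (r.push θ) (fun i => (r₂ i).push θ)]
  simp only [map_sum, TensorProduct.map_tmul, Coalgebra.Repr.push,
    show ∀ x : H, θ.toLinearMap x = θ x from fun _ => rfl, map_mul,
    BialgHom.map_antipode' θ]

lemma map_adr (θ : H →ₐc[k] L) (a : H) :
    TensorProduct.map θ.toLinearMap θ.toLinearMap (adr k H a) = adr k L (θ a) := by
  set r := ℛ k a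
  set r₂ : ∀ i, Coalgebra.Repr k (r.right i) (H × H) := fun i => ℛ k (r.right i)
  rw [adr, adr, adrWith_repr _ r r₂,
    adrWith_repr (HopfAlgebra.antipode (R := k)) (r.push θ) (fun i => (r₂ i).push θ)]
  simp only [map_sum, TensorProduct.map_tmul, Coalgebra.Repr.push,
    show ∀ x : H, θ.toLinearMap x = θ x from fun _ => rfl, map_mul,
    BialgHom.map_antipode' θ]

lemma map_mem_range_mapIncl (θ : H →ₗ[k] L) (p : Submodule k H) (q : Submodule k L)
    (hpq : ∀ x ∈ p, θ x ∈ q) {t : H ⊗[k] H}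
    (ht : t ∈ LinearMap.range (TensorProduct.mapIncl p (⊤ : Submodule k H))) :
    TensorProduct.map θ θ t ∈
      LinearMap.range (TensorProduct.mapIncl q (⊤ : Submodule k L)) := by
  obtain ⟨s, rfl⟩ := ht
  induction s using TensorProduct.induction_on with
  | zero => simp
  | tmul x y =>
      exact ⟨(⟨θ x.1, hpq x.1 x.2⟩ : q) ⊗ₜ[k] (⟨θ y.1, trivial⟩ : (⊤ : Submodule k L)),
        rfl⟩
  | add x y hx hy =>
      rw [map_add, map_add]
      exact add_mem hx hy

end Naturality

/-- If `π : H → K` factors as `π = π₁ ∘ θ` through a surjective Hopf algebra morphism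
`θ : H → L` and `ker π` is a-normal in `H`, then `ker π₁` is a-normal in `L`. -/
theorem induced_ker_anormal {k H K L : Type*} [Field k] [Ring H] [Ring K] [Ring L]
    [HopfAlgebra k H] [HopfAlgebra k K] [HopfAlgebra k L]
    (π : H →ₐc[k] K) (θ : H →ₐc[k] L) (π₁ : L →ₐc[k] K)
    (hπ : Function.Surjective π) (hθ : Function.Surjective θ)
    (hπ₁ : Function.Surjective π₁)
    (hcomp : ∀ x : H, π x = π₁ (θ x))
    (hker : LinearMap.ker θ.toLinearMap ≤ LinearMap.ker π.toLinearMap)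
    (hnormal : ∀ a ∈ LinearMap.ker π.toLinearMap,
      adl k H a ∈ LinearMap.range
        (TensorProduct.mapIncl (LinearMap.ker π.toLinearMap) (⊤ : Submodule k H)) ∧
      adr k H a ∈ LinearMap.range
        (TensorProduct.mapIncl (LinearMap.ker π.toLinearMap) (⊤ : Submodule k H))) :
    ∀ b ∈ LinearMap.ker π₁.toLinearMap,
      adl k L b ∈ LinearMap.range
        (TensorProduct.mapIncl (LinearMap.ker π₁.toLinearMap) (⊤ : Submodule k L)) ∧
      adr k L b ∈ LinearMap.range
        (TensorProduct.mapIncl (LinearMap.ker π₁.toLinearMap) (⊤ : Submodule k L)) := by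
  intro b hb
  obtain ⟨a, rfl⟩ := hθ b
  have ha : a ∈ LinearMap.ker π.toLinearMap :=
    show π a = 0 from (hcomp a).trans hb
  have hpq : ∀ x ∈ LinearMap.ker π.toLinearMap, θ.toLinearMap x ∈
      LinearMap.ker π₁.toLinearMap := by
    intro x hx
    exact show π₁ (θ x) = 0 from (hcomp x).symm.trans hx
  obtain ⟨h1, h2⟩ := hnormal a ha
  constructor
  · rw [← map_adl θ a]
    exact map_mem_range_mapIncl θ.toLinearMap _ _ hpq h1
  · rw [← map_adr θ a]
    exact map_mem_range_mapIncl θ.toLinearMap _ _ hpq h2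
end

section
/- Let H be a Hopf algebra over a field k with bijective antipode S, and let I be a Hopf ideal of H with quotient morphism π : H → H/I. If I is right a-normal (ad_r(a) = Σ a_(2) ⊗ S(a_(1))a_(3) ∈ I ⊗ H for all a ∈ I), then the right coinvariants are contained in the left coinvariants: { a ∈ H : (id ⊗ π)Δ(a) = a ⊗ 1 } ⊆ { a ∈ H : (π ⊗ id)Δ(a) = 1 ⊗ a }. -/
open TensorProduct Coalgebra HopfAlgebra

section Aux

variable (k H : Type*) [CommRing k] [Ring H] [HopfAlgebra k H]

/-- The "shuffle-multiply" map `u ⊗ (x ⊗ v) ↦ x ⊗ (u * v)`. -/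
noncomputable def psiAux : H ⊗[k] (H ⊗[k] H) →ₗ[k] H ⊗[k] H :=
  (LinearMap.lTensor H (LinearMap.mul' k H)) ∘ₗ
  (TensorProduct.assoc k H H H).toLinearMap ∘ₗ
  (LinearMap.rTensor H (TensorProduct.comm k H H).toLinearMap) ∘ₗ
  (TensorProduct.assoc k H H H).symm.toLinearMap

variable {k H}

@[simp] lemma psiAux_tmul (u x v : H) :
    psiAux k H (u ⊗ₜ[k] (x ⊗ₜ[k] v)) = x ⊗ₜ[k] (u * v) := by
  simp [psiAux]

lemma psiAux_one_tmul (t : H ⊗[k] H) : psiAux k H ((1 : H) ⊗ₜ[k] t) = t := by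
  induction t using TensorProduct.induction_on with
  | zero => simp
  | tmul x v => simp
  | add x y hx hy => rw [TensorProduct.tmul_add, map_add, hx, hy]

lemma psiAux_psiAux (b c : H) (t : H ⊗[k] H) :
    psiAux k H (b ⊗ₜ[k] psiAux k H (c ⊗ₜ[k] t)) = psiAux k H ((b * c) ⊗ₜ[k] t) := by
  induction t using TensorProduct.induction_on with
  | zero => simp
  | tmul x v => simp [mul_assoc]
  | add x y hx hy =>
      rw [TensorProduct.tmul_add, map_add, TensorProduct.tmul_add, map_add,
        TensorProduct.tmul_add, map_add, hx, hy]

lemma adr_eq :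
    adr k H = psiAux k H ∘ₗ
      (LinearMap.rTensor (H ⊗[k] H) (HopfAlgebra.antipode (R := k))) ∘ₗ
      (LinearMap.lTensor H Coalgebra.comul) ∘ₗ Coalgebra.comul := rfl

/-- The key Hopf-algebra identity: `Σ a₍₃₎ ⊗ a₍₁₎ S(a₍₂₎) a₍₄₎ = Σ a₍₁₎ ⊗ a₍₂₎`. -/
lemma psiAux_lTensor_adr_comul (a : H) :
    psiAux k H (LinearMap.lTensor H (adr k H) (Coalgebra.comul a)) = Coalgebra.comul a := by
  classical
  set S : H →ₗ[k] H := HopfAlgebra.antipode (R := k)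
  -- split off the outer comultiplication inside `adr`
  have h1 : LinearMap.lTensor H (adr k H) (Coalgebra.comul a) =
      LinearMap.lTensor H (psiAux k H ∘ₗ
        (LinearMap.rTensor (H ⊗[k] H) S) ∘ₗ (LinearMap.lTensor H Coalgebra.comul))
        (LinearMap.lTensor H Coalgebra.comul (Coalgebra.comul a)) := by
    have hadr : adr k H = (psiAux k H ∘ₗ
        (LinearMap.rTensor (H ⊗[k] H) S) ∘ₗ (LinearMap.lTensor H Coalgebra.comul)) ∘ₗ
        Coalgebra.comul := rfl
    rw [hadr, LinearMap.lTensor_comp, LinearMap.comp_apply]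
  -- coassociativity
  have h2 : LinearMap.lTensor H (Coalgebra.comul (R := k)) (Coalgebra.comul a) =
      (TensorProduct.assoc k H H H).toLinearMap
        (LinearMap.rTensor H (Coalgebra.comul (R := k)) (Coalgebra.comul a)) := by
    have := Coalgebra.coassoc (R := k) (A := H)
    exact (LinearMap.congr_fun this a).symm
  rw [h1, h2]
  -- now everything is a linear map applied to `rTensor comul (comul a)`;
  -- rewrite it on pure tensors
  have key : ∀ v : (H ⊗[k] H) ⊗[k] H,
      psiAux k H (LinearMap.lTensor H (psiAux k H ∘ₗ
        (LinearMap.rTensor (H ⊗[k] H) S) ∘ₗ (LinearMap.lTensor H Coalgebra.comul))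
        ((TensorProduct.assoc k H H H).toLinearMap v)) =
      psiAux k H (LinearMap.lTensor H (Coalgebra.comul (R := k))
        (LinearMap.rTensor H (LinearMap.mul' k H ∘ₗ LinearMap.lTensor H S) v)) := by
    intro v
    induction v using TensorProduct.induction_on with
    | zero => simp only [map_zero]
    | tmul bc d =>
        induction bc using TensorProduct.induction_on with
        | zero => simp only [TensorProduct.zero_tmul, map_zero]
        | tmul b c =>
            simp only [LinearEquiv.coe_coe, TensorProduct.assoc_tmul,
              LinearMap.lTensor_tmul, LinearMap.rTensor_tmul, LinearMap.comp_apply,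
              LinearMap.mul'_apply]
            exact psiAux_psiAux b (S c) (Coalgebra.comul d)
        | add x y hx hy =>
            simp only [TensorProduct.add_tmul, map_add, hx, hy]
    | add x y hx hy => simp only [map_add, hx, hy]
  rw [key]
  -- use the antipode axiom
  have h3 : LinearMap.rTensor H (LinearMap.mul' k H ∘ₗ LinearMap.lTensor H S)
      (LinearMap.rTensor H (Coalgebra.comul (R := k)) (Coalgebra.comul a)) =
      (1 : H) ⊗ₜ[k] a := by
    rw [← LinearMap.comp_apply, ← LinearMap.rTensor_comp]
    have hS : (LinearMap.mul' k H ∘ₗ LinearMap.lTensor H S) ∘ₗ Coalgebra.comul =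
        (Algebra.linearMap k H) ∘ₗ Coalgebra.counit := by
      rw [LinearMap.comp_assoc]
      exact HopfAlgebra.mul_antipode_lTensor_comul
    rw [hS, LinearMap.rTensor_comp, LinearMap.comp_apply,
      Coalgebra.rTensor_counit_comul, LinearMap.rTensor_tmul]
    simp
  rw [h3, LinearMap.lTensor_tmul, psiAux_one_tmul]

lemma antipode_one' : (HopfAlgebra.antipode (R := k) (1 : H)) = 1 := by
  have := HopfAlgebra.mul_antipode_rTensor_comul_apply (R := k) (a := (1 : H))
  simpa [Algebra.TensorProduct.one_def] using this

lemma adr_one : adr k H (1 : H) = (1 : H) ⊗ₜ[k] (1 : H) := by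
  rw [adr_eq]
  simp [Algebra.TensorProduct.one_def, antipode_one']

end Aux

/-- If the antipode of `H` is bijective and the Hopf ideal `I = ker π` is right
a-normal, then the right coinvariants for `π` are contained in the left coinvariants. -/
theorem right_anormal_coinv_subset {k H K : Type*} [Field k] [Ring H] [Ring K]
    [HopfAlgebra k H] [HopfAlgebra k K] (π : H →ₐc[k] K)
    (hsurj : Function.Surjective π)
    (hSbij : Function.Bijective (HopfAlgebra.antipode (R := k) (A := H)))
    (I : Submodule k H) (hI : I = LinearMap.ker π.toLinearMap)
    (hanormal : ∀ a ∈ I,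
      adr k H a ∈ LinearMap.range (TensorProduct.mapIncl I (⊤ : Submodule k H))) :
    {a : H | LinearMap.lTensor H π.toLinearMap (Coalgebra.comul a) = a ⊗ₜ[k] (1 : K)} ⊆
    {a : H | LinearMap.rTensor H π.toLinearMap (Coalgebra.comul a) = (1 : K) ⊗ₜ[k] a} := by
  intro a ha
  simp only [Set.mem_setOf_eq] at ha ⊢
  subst hI
  set I : Submodule k H := LinearMap.ker π.toLinearMap with hI
  have hgen : ∀ (x : H) (t : (↥I) ⊗[k] (↥(⊤ : Submodule k H))),
      LinearMap.rTensor H π.toLinearMap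
        (psiAux k H (x ⊗ₜ[k] TensorProduct.mapIncl I (⊤ : Submodule k H) t)) = 0 := by
    intro x t
    induction t using TensorProduct.induction_on with
    | zero => simp only [map_zero, TensorProduct.tmul_zero]
    | tmul p q =>
        simp only [TensorProduct.mapIncl, TensorProduct.map_tmul,
          Submodule.coe_subtype, psiAux_tmul, LinearMap.rTensor_tmul]
        rw [show π.toLinearMap (p : H) = 0 from p.2, TensorProduct.zero_tmul]
    | add s t hs ht' =>
        simp only [map_add, TensorProduct.tmul_add, hs, ht', add_zero]
  -- `comul a - a ⊗ₜ 1 ∈ ker (lTensor π) = range (lTensor I.subtype)`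
  have hmem : Coalgebra.comul (R := k) a - a ⊗ₜ[k] (1 : H) ∈
      LinearMap.ker (LinearMap.lTensor H π.toLinearMap) := by
    rw [LinearMap.mem_ker, map_sub, ha, LinearMap.lTensor_tmul,
      show π.toLinearMap (1 : H) = 1 from map_one π, sub_self]
  have hexact : Function.Exact (LinearMap.lTensor H I.subtype)
      (LinearMap.lTensor H π.toLinearMap) := by
    apply Module.Flat.lTensor_exact
    rw [hI]
    exact LinearMap.exact_subtype_ker_map π.toLinearMap
  obtain ⟨w, hw⟩ := (hexact _).mp hmem
  -- decompose comul a
  have hdecomp : Coalgebra.comul (R := k) a =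
      a ⊗ₜ[k] (1 : H) + LinearMap.lTensor H I.subtype w := by
    rw [hw]; abel
  -- the key identity
  have hkey := psiAux_lTensor_adr_comul (k := k) a
  -- compute `rTensor π (psi (lTensor adr (comul a)))`
  have hzero : LinearMap.rTensor H π.toLinearMap
      (psiAux k H (LinearMap.lTensor H (adr k H)
        (LinearMap.lTensor H I.subtype w))) = 0 := by
    clear hw hdecomp
    induction w using TensorProduct.induction_on with
    | zero => simp
    | tmul x y =>
        simp only [LinearMap.lTensor_tmul]
        obtain ⟨t, ht⟩ := hanormal (y : H) y.2
        rw [show (I.subtype y : H) = (y : H) from rfl, ← ht]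
        exact hgen x t
    | add s t hs ht =>
        simp only [map_add, hs, ht, add_zero]
  calc LinearMap.rTensor H π.toLinearMap (Coalgebra.comul a)
      = LinearMap.rTensor H π.toLinearMap
          (psiAux k H (LinearMap.lTensor H (adr k H) (Coalgebra.comul a))) := by rw [hkey]
    _ = LinearMap.rTensor H π.toLinearMap
          (psiAux k H (LinearMap.lTensor H (adr k H) (a ⊗ₜ[k] (1 : H)))) +
        LinearMap.rTensor H π.toLinearMap
          (psiAux k H (LinearMap.lTensor H (adr k H)
            (LinearMap.lTensor H I.subtype w))) := by
          rw [← map_add, ← map_add, ← map_add, ← hdecomp]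
    _ = (1 : K) ⊗ₜ[k] a := by
          rw [hzero, add_zero, LinearMap.lTensor_tmul, adr_one, psiAux_tmul,
            LinearMap.rTensor_tmul, mul_one,
            show π.toLinearMap (1 : H) = 1 from map_one π]
end
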